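/- arXiv:1409.4683 — 4 statements merged into one kernel-verified Lean document; each statement's English description precedes it below -/
import Mathlib

section
/- (Loomis–Whitney inequality) Let n ≥ 2 and for j = 1, ..., n let π_j : ℝ^n → ℝ^{n-1} be the linear map forgetting the j-th coordinate, π_j(x_1, ..., x_n) = (x_1, ..., x_{j-1}, x_{j+1}, ..., x_n). If f_1, ..., f_n : ℝ^{n-1} → [0, ∞) are measurable functions, then ∫_{ℝ^n} ∏_{j=1}^n f_j(π_j(x))^{1/(n-1)} dx ≤ ∏_{j=1}^n ‖f_j‖_{L¹(ℝ^{n-1})}^{1/(n-1)}. -/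
open MeasureTheory Finset
open scoped ENNReal

noncomputable section

/-- The line in `ℝⁿ` through `p` with direction `v`. -/
def line {n : ℕ} (p v : EuclideanSpace ℝ (Fin n)) : Set (EuclideanSpace ℝ (Fin n)) :=
  {x | ∃ t : ℝ, x = p + t • v}

/-- `ℝ≥0∞`-valued characteristic function of the `W`-neighborhood of the set `A`:
the indicator of `{x : dist(x, A) ≤ W}`. -/
def tubeFn {n : ℕ} (A : Set (EuclideanSpace ℝ (Fin n))) (W : ℝ)
    (x : EuclideanSpace ℝ (Fin n)) : ℝ≥0∞ :=
  Set.indicator {y | Metric.infDist y A ≤ W} 1 x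

/-- Axis-parallel cube with corner `c` and side length `S`. -/
def cube {n : ℕ} (c : EuclideanSpace ℝ (Fin n)) (S : ℝ) : Set (EuclideanSpace ℝ (Fin n)) :=
  {x | ∀ i, x i ∈ Set.Icc (c i) (c i + S)}

/-- The projection `ℝⁿ → ℝ^{n-1}` forgetting the `j`-th coordinate. -/
def proj {n : ℕ} (j : Fin n) (x : EuclideanSpace ℝ (Fin n)) :
    EuclideanSpace ℝ (Fin (n - 1)) :=
  WithLp.toLp 2 (fun i : Fin (n - 1) => if (i : ℕ) < (j : ℕ) then x ⟨i, by omega⟩ else x ⟨i + 1, by omega⟩)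

/-- The graph of `g : ℝ → ℝ^{n-1}` over the `x_j`-axis. -/
def lipGraph {n : ℕ} (j : Fin n) (g : ℝ → EuclideanSpace ℝ (Fin (n - 1))) :
    Set (EuclideanSpace ℝ (Fin n)) :=
  {x | proj j x = g (x j)}

lemma snoc_comp_succAbove' {α : Type*} {k : ℕ} (x' : Fin (k+1) → α) (t : α) (j : Fin (k+1)) :
    (Fin.snoc x' t : Fin (k+2) → α) ∘ (j.castSucc).succAbove
      = Fin.snoc (x' ∘ j.succAbove : Fin k → α) t := by
  funext i
  induction i using Fin.lastCases with
  | last =>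
      have h : (j.castSucc).succAbove (Fin.last k) = Fin.last (k+1) := by
        rw [Fin.succAbove_of_le_castSucc _ _ (by simp [Fin.le_castSucc_iff, Fin.castSucc_lt_last])]
        rfl
      simp [h]
  | cast i =>
      by_cases h : i.castSucc < j
      · rw [Function.comp_apply, Fin.succAbove_of_castSucc_lt _ _ (by simpa using h)]
        simp [Fin.succAbove_of_castSucc_lt _ _ h]
      · rw [Function.comp_apply, Fin.succAbove_of_le_castSucc _ _ (by simpa using h)]
        rw [Fin.succ_castSucc]
        simp [Fin.succAbove_of_le_castSucc _ _ (not_lt.1 h)]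
        exact Fin.snoc_castSucc (α := fun _ => α) (p := x') (x := t) (i := i.succ)

lemma snoc_comp_last {α : Type*} {k : ℕ} (x' : Fin (k+1) → α) (t : α) :
    (Fin.snoc x' t : Fin (k+2) → α) ∘ (Fin.last (k+1)).succAbove = x' := by
  funext i
  simp [Fin.succAbove_last]

private lemma LW_pi : ∀ (m : ℕ) (f : Fin (m + 2) → (Fin (m + 1) → ℝ) → ℝ≥0∞),
    (∀ j, Measurable (f j)) →
    ∫⁻ x : Fin (m + 2) → ℝ, ∏ j, f j (x ∘ j.succAbove) ^ ((1 : ℝ) / (m + 1))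
      ≤ ∏ j, (∫⁻ y, f j y) ^ ((1 : ℝ) / (m + 1)) := by
  intro m
  induction m with
  | zero =>
      intro f hf
      have h1 : ((1 : ℝ) / ((0 : ℕ) + 1)) = 1 := by norm_num
      rw [h1]
      simp only [ENNReal.rpow_one]
      set e : (Fin 2 → ℝ) ≃ᵐ ℝ × (Fin 1 → ℝ) :=
        MeasurableEquiv.piFinSuccAbove (fun _ => ℝ) (Fin.last 1) with he
      have hE : MeasurePreserving e volume volume :=
        volume_preserving_piFinSuccAbove _ _
      have hesymm : ∀ z : ℝ × (Fin 1 → ℝ), e.symm z = Fin.snoc z.2 z.1 := by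
        intro z
        simp [he, MeasurableEquiv.piFinSuccAbove_symm_apply, Fin.insertNthEquiv,
          Fin.insertNth_last']
        exact Fin.insertNth_last' _ _
      have hsnoc1 : ∀ (y : Fin 1 → ℝ) (t : ℝ),
          (Fin.snoc y t : Fin 2 → ℝ) ∘ (0 : Fin 2).succAbove = fun _ => t := by
        intro y t
        funext i
        rw [Subsingleton.elim i 0]
        show (Fin.snoc y t : Fin 2 → ℝ) ((0 : Fin 2).succAbove 0) = t
        rw [show (0 : Fin 2).succAbove 0 = Fin.last 1 by decide, Fin.snoc_last]
      have hsnoc2 : ∀ (y : Fin 1 → ℝ) (t : ℝ),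
          (Fin.snoc y t : Fin 2 → ℝ) ∘ (1 : Fin 2).succAbove = y := by
        intro y t
        funext i
        rw [Subsingleton.elim i 0]
        show (Fin.snoc y t : Fin 2 → ℝ) ((1 : Fin 2).succAbove 0) = y 0
        rw [show (1 : Fin 2).succAbove 0 = Fin.castSucc 0 by decide, Fin.snoc_castSucc]
      have hconst : Measurable fun t : ℝ => f 0 (fun _ : Fin 1 => t) :=
        (hf 0).comp (measurable_pi_lambda _ fun _ => measurable_id)
      calc ∫⁻ x : Fin 2 → ℝ, ∏ j, f j (x ∘ j.succAbove)
          = ∫⁻ z : ℝ × (Fin 1 → ℝ), ∏ j, f j ((e.symm z) ∘ j.succAbove) :=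
            ((hE.symm e).lintegral_comp_emb e.symm.measurableEmbedding
              (fun v => ∏ j, f j (v ∘ j.succAbove))).symm
        _ = ∫⁻ z : ℝ × (Fin 1 → ℝ), f 0 (fun _ => z.1) * f 1 z.2 := by
            refine lintegral_congr fun z => ?_
            rw [Fin.prod_univ_two, hesymm, hsnoc2, hsnoc1]
        _ = (∫⁻ t : ℝ, f 0 (fun _ => t)) * ∫⁻ y, f 1 y := by
            rw [Measure.volume_eq_prod]
            exact lintegral_prod_mul hconst.aemeasurable (hf 1).aemeasurable
        _ = (∫⁻ y, f 0 y) * ∫⁻ y, f 1 y := by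
            congr 1
            have hU : MeasurePreserving (MeasurableEquiv.funUnique (Fin 1) ℝ) volume volume :=
              volume_preserving_funUnique _ _
            rw [← (hU.symm _).lintegral_comp_emb
              (MeasurableEquiv.funUnique (Fin 1) ℝ).symm.measurableEmbedding (f 0)]
            exact lintegral_congr fun t => by congr 1
        _ ≤ ∏ j : Fin (0 + 2), ∫⁻ y : Fin (0 + 1) → ℝ, f j y :=
            le_of_eq
              (Fin.prod_univ_two (f := fun j : Fin (0 + 2) => ∫⁻ y : Fin (0 + 1) → ℝ, f j y)).symm
  | succ m ih =>
      intro f hf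
      have hcast : ((m + 1 : ℕ) : ℝ) + 1 = (m : ℝ) + 2 := by push_cast; ring
      rw [hcast]
      set P : ℝ := (1 : ℝ) / ((m : ℝ) + 2) with hPdef
      set Q : ℝ := (1 : ℝ) / ((m : ℕ) + 1 : ℝ) with hQdef
      set R : ℝ := ((m : ℝ) + 1) / ((m : ℝ) + 2) with hRdef
      have hm1 : ((m : ℝ) + 1) ≠ 0 := by positivity
      have hm2 : ((m : ℝ) + 2) ≠ 0 := by positivity
      have hP0 : 0 ≤ P := by positivity
      have hR0 : 0 ≤ R := by positivity
      have haux : ((m : ℝ) + 1) + 1 = (m : ℝ) + 2 := by ring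
      have hRP : R + P = 1 := by
        rw [hRdef, hPdef, ← add_div, haux, div_self hm2]
      have hQR : Q * R = P := by
        rw [hQdef, hRdef, hPdef]
        field_simp
      set e : (Fin (m + 3) → ℝ) ≃ᵐ ℝ × (Fin (m + 2) → ℝ) :=
        MeasurableEquiv.piFinSuccAbove (fun _ => ℝ) (Fin.last (m + 2)) with he
      set e' : (Fin (m + 2) → ℝ) ≃ᵐ ℝ × (Fin (m + 1) → ℝ) :=
        MeasurableEquiv.piFinSuccAbove (fun _ => ℝ) (Fin.last (m + 1)) with he'
      have hE : MeasurePreserving e volume volume := volume_preserving_piFinSuccAbove _ _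
      have hE' : MeasurePreserving e' volume volume := volume_preserving_piFinSuccAbove _ _
      have hesymm : ∀ z : ℝ × (Fin (m + 2) → ℝ), e.symm z = Fin.snoc z.2 z.1 := by
        intro z
        simp [he, MeasurableEquiv.piFinSuccAbove_symm_apply, Fin.insertNthEquiv,
          Fin.insertNth_last']
      have hesymm' : ∀ z : ℝ × (Fin (m + 1) → ℝ), e'.symm z = Fin.snoc z.2 z.1 := by
        intro z
        simp [he', MeasurableEquiv.piFinSuccAbove_symm_apply, Fin.insertNthEquiv,
          Fin.insertNth_last']
      have hsnoc_meas : Measurable fun z : ℝ × (Fin (m + 1) → ℝ) =>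
          (Fin.snoc z.2 z.1 : Fin (m + 2) → ℝ) := by
        rw [show (fun z : ℝ × (Fin (m + 1) → ℝ) => (Fin.snoc z.2 z.1 : Fin (m + 2) → ℝ))
            = ⇑e'.symm from funext fun z => (hesymm' z).symm]
        exact e'.symm.measurable
      set F : (Fin (m + 3) → ℝ) → ℝ≥0∞ := fun x => ∏ j, f j (x ∘ j.succAbove) ^ P with hFdef
      have hF : Measurable F :=
        Finset.measurable_prod _ fun j _ =>
          ((hf j).comp (measurable_pi_lambda _ fun i => measurable_pi_apply _)).pow_const _
      have stepA : ∫⁻ x : Fin (m + 3) → ℝ, F x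
          = ∫⁻ t : ℝ, ∫⁻ y : Fin (m + 2) → ℝ, F (Fin.snoc y t) := by
        have h1 : ∫⁻ x : Fin (m + 3) → ℝ, F x
            = ∫⁻ z : ℝ × (Fin (m + 2) → ℝ), F (e.symm z) :=
          ((hE.symm e).lintegral_comp_emb e.symm.measurableEmbedding F).symm
        rw [h1, Measure.volume_eq_prod,
          lintegral_prod (fun z => F (e.symm z)) (hF.comp e.symm.measurable).aemeasurable]
        refine lintegral_congr fun t => lintegral_congr fun y => ?_
        rw [hesymm]
      have hFsnoc : ∀ (t : ℝ) (y : Fin (m + 2) → ℝ),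
          F (Fin.snoc y t)
            = (∏ j' : Fin (m + 2), f j'.castSucc (Fin.snoc (y ∘ j'.succAbove) t) ^ P)
                * f (Fin.last (m + 2)) y ^ P := by
        intro t y
        show ∏ j : Fin (m + 3), f j ((Fin.snoc y t : Fin (m + 3) → ℝ) ∘ j.succAbove) ^ P = _
        rw [Fin.prod_univ_castSucc
          (f := fun j : Fin (m + 3) => f j ((Fin.snoc y t : Fin (m + 3) → ℝ) ∘ j.succAbove) ^ P)]
        congr 1
        · exact Finset.prod_congr rfl fun j' _ => by rw [snoc_comp_succAbove']
        · rw [snoc_comp_last]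
      have hsec1 : ∀ t : ℝ, Measurable fun w : Fin (m + 1) → ℝ =>
          (Fin.snoc w t : Fin (m + 2) → ℝ) := fun t =>
        hsnoc_meas.comp (measurable_const.prodMk measurable_id)
      have inner : ∀ t : ℝ, ∫⁻ y : Fin (m + 2) → ℝ, F (Fin.snoc y t)
          ≤ (∏ j' : Fin (m + 2), (∫⁻ w : Fin (m + 1) → ℝ, f j'.castSucc (Fin.snoc w t)) ^ P)
              * (∫⁻ y, f (Fin.last (m + 2)) y) ^ P := by
        intro t
        have hsec : ∀ j' : Fin (m + 2), Measurable fun y : Fin (m + 2) → ℝ =>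
            (Fin.snoc (y ∘ j'.succAbove) t : Fin (m + 2) → ℝ) := fun j' =>
          (hsec1 t).comp (measurable_pi_lambda _ fun i => measurable_pi_apply _)
        have hg : ∀ j' : Fin (m + 2), Measurable fun y : Fin (m + 2) → ℝ =>
            f j'.castSucc (Fin.snoc (y ∘ j'.succAbove) t) := fun j' =>
          (hf _).comp (hsec j')
        calc ∫⁻ y, F (Fin.snoc y t)
            = ∫⁻ y, (∏ j' : Fin (m + 2),
                  f j'.castSucc (Fin.snoc (y ∘ j'.succAbove) t) ^ Q) ^ R
                * f (Fin.last (m + 2)) y ^ P := by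
              refine lintegral_congr fun y => ?_
              rw [hFsnoc]
              congr 1
              rw [← ENNReal.prod_rpow_of_nonneg hR0]
              exact Finset.prod_congr rfl fun j' _ => by
                rw [← ENNReal.rpow_mul, hQR]
          _ ≤ (∫⁻ y, ∏ j' : Fin (m + 2),
                  f j'.castSucc (Fin.snoc (y ∘ j'.succAbove) t) ^ Q) ^ R
                * (∫⁻ y, f (Fin.last (m + 2)) y) ^ P :=
              ENNReal.lintegral_mul_norm_pow_le
                (Finset.aemeasurable_fun_prod _ fun j' _ => ((hg j').pow_const _).aemeasurable)
                (hf _).aemeasurable hR0 hP0 hRP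
          _ ≤ (∏ j' : Fin (m + 2),
                  (∫⁻ w : Fin (m + 1) → ℝ, f j'.castSucc (Fin.snoc w t)) ^ Q) ^ R
                * (∫⁻ y, f (Fin.last (m + 2)) y) ^ P := by
              gcongr
              exact ih (fun j' => fun w => f j'.castSucc (Fin.snoc w t))
                (fun j' => (hf _).comp (hsec1 t))
          _ = (∏ j' : Fin (m + 2),
                  (∫⁻ w : Fin (m + 1) → ℝ, f j'.castSucc (Fin.snoc w t)) ^ P)
                * (∫⁻ y, f (Fin.last (m + 2)) y) ^ P := by
              congr 1
              rw [← ENNReal.prod_rpow_of_nonneg hR0]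
              exact Finset.prod_congr rfl fun j' _ => by
                rw [← ENNReal.rpow_mul, hQR]
      have hHmeas : ∀ j' : Fin (m + 2), Measurable fun t : ℝ =>
          ∫⁻ w : Fin (m + 1) → ℝ, f j'.castSucc (Fin.snoc w t) := fun j' =>
        Measurable.lintegral_prod_right ((hf _).comp hsnoc_meas)
      have hH_int : ∀ j' : Fin (m + 2),
          ∫⁻ t : ℝ, ∫⁻ w : Fin (m + 1) → ℝ, f j'.castSucc (Fin.snoc w t)
            = ∫⁻ x : Fin (m + 2) → ℝ, f j'.castSucc x := by
        intro j'
        calc ∫⁻ t : ℝ, ∫⁻ w, f j'.castSucc (Fin.snoc w t)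
            = ∫⁻ z : ℝ × (Fin (m + 1) → ℝ), f j'.castSucc (Fin.snoc z.2 z.1)
                ∂(volume.prod volume) :=
              (lintegral_prod _ ((hf _).comp hsnoc_meas).aemeasurable).symm
          _ = ∫⁻ z : ℝ × (Fin (m + 1) → ℝ), f j'.castSucc (e'.symm z) := by
              rw [← Measure.volume_eq_prod]
              exact lintegral_congr fun z => by rw [hesymm']
          _ = ∫⁻ x : Fin (m + 2) → ℝ, f j'.castSucc x :=
              (hE'.symm e').lintegral_comp_emb e'.symm.measurableEmbedding _
      have hsum : ∑ _j' : Fin (m + 2), P = 1 := by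
        rw [Finset.sum_const, Finset.card_univ, Fintype.card_fin, nsmul_eq_mul, hPdef]
        push_cast
        field_simp
      calc ∫⁻ x : Fin (m + 3) → ℝ, F x
          = ∫⁻ t : ℝ, ∫⁻ y : Fin (m + 2) → ℝ, F (Fin.snoc y t) := stepA
        _ ≤ ∫⁻ t : ℝ, (∏ j' : Fin (m + 2),
              (∫⁻ w : Fin (m + 1) → ℝ, f j'.castSucc (Fin.snoc w t)) ^ P)
              * (∫⁻ y, f (Fin.last (m + 2)) y) ^ P := lintegral_mono inner
        _ = (∫⁻ t : ℝ, ∏ j' : Fin (m + 2),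
              (∫⁻ w : Fin (m + 1) → ℝ, f j'.castSucc (Fin.snoc w t)) ^ P)
              * (∫⁻ y, f (Fin.last (m + 2)) y) ^ P :=
            lintegral_mul_const'' _
              (Finset.measurable_prod _ fun j' _ => (hHmeas j').pow_const _).aemeasurable
        _ ≤ (∏ j' : Fin (m + 2),
              (∫⁻ t : ℝ, ∫⁻ w : Fin (m + 1) → ℝ, f j'.castSucc (Fin.snoc w t)) ^ P)
              * (∫⁻ y, f (Fin.last (m + 2)) y) ^ P := by
            gcongr
            exact ENNReal.lintegral_prod_norm_pow_le _
              (fun j' _ => (hHmeas j').aemeasurable) hsum (fun _ _ => hP0)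
        _ = (∏ j' : Fin (m + 2), (∫⁻ x, f j'.castSucc x) ^ P)
              * (∫⁻ y, f (Fin.last (m + 2)) y) ^ P := by
            congr 1
            exact Finset.prod_congr rfl fun j' _ => by rw [hH_int]
        _ = ∏ j : Fin (m + 3), (∫⁻ y : Fin (m + 2) → ℝ, f j y) ^ P :=
            (Fin.prod_univ_castSucc
              (f := fun j : Fin (m + 3) => (∫⁻ y : Fin (m + 2) → ℝ, f j y) ^ P)).symm

lemma proj_eq {m : ℕ} (j : Fin (m + 2)) (x : EuclideanSpace ℝ (Fin (m + 2)))
    (i : Fin (m + 1)) : proj j x i = x (j.succAbove i) := by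
  by_cases h : (i : ℕ) < (j : ℕ)
  · have h' : Fin.castSucc i < j := by rwa [Fin.lt_def]
    rw [Fin.succAbove_of_castSucc_lt _ _ h']
    simp only [proj, if_pos h]
    rfl
  · have h' : j ≤ Fin.castSucc i := not_lt.1 (by rwa [Fin.lt_def])
    rw [Fin.succAbove_of_le_castSucc _ _ h']
    simp only [proj, if_neg h]
    rfl

/-- The Loomis–Whitney inequality: for measurable `f_j : ℝ^{n-1} → [0,∞)`,
`∫_{ℝⁿ} ∏_j f_j(π_j x)^{1/(n-1)} dx ≤ ∏_j ‖f_j‖_{L¹}^{1/(n-1)}`. -/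
theorem loomis_whitney (n : ℕ) (hn : 2 ≤ n)
    (f : Fin n → EuclideanSpace ℝ (Fin (n - 1)) → ℝ)
    (hf : ∀ j, Measurable (f j)) (hf0 : ∀ j y, 0 ≤ f j y) :
    ∫⁻ x : EuclideanSpace ℝ (Fin n),
        ∏ j : Fin n, (ENNReal.ofReal (f j (proj j x))) ^ ((1 : ℝ) / ((n : ℝ) - 1))
      ≤ ∏ j : Fin n,
          (∫⁻ y : EuclideanSpace ℝ (Fin (n - 1)), ENNReal.ofReal (f j y)) ^
            ((1 : ℝ) / ((n : ℝ) - 1)) := by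
  obtain ⟨m, rfl⟩ : ∃ m, n = m + 2 := ⟨n - 2, by omega⟩
  have hexp : (1 : ℝ) / (((m + 2 : ℕ) : ℝ) - 1) = (1 : ℝ) / ((m : ℝ) + 1) := by
    push_cast; ring_nf
  rw [hexp]
  set eE : EuclideanSpace ℝ (Fin (m + 2)) ≃ᵐ (Fin (m + 2) → ℝ) :=
    (MeasurableEquiv.toLp 2 (Fin (m + 2) → ℝ)).symm with heE
  set eE' : EuclideanSpace ℝ (Fin (m + 1)) ≃ᵐ (Fin (m + 1) → ℝ) :=
    (MeasurableEquiv.toLp 2 (Fin (m + 1) → ℝ)).symm with heE'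
  have hEq : MeasurePreserving eE volume volume :=
    EuclideanSpace.volume_preserving_symm_measurableEquiv_toLp _
  have hEq' : MeasurePreserving eE' volume volume :=
    EuclideanSpace.volume_preserving_symm_measurableEquiv_toLp _
  set g : Fin (m + 2) → (Fin (m + 1) → ℝ) → ℝ≥0∞ :=
    fun j y => ENNReal.ofReal (f j (eE'.symm y)) with hgdef
  have hg : ∀ j, Measurable (g j) := fun j =>
    ((hf j).comp eE'.symm.measurable).ennreal_ofReal
  set G : (Fin (m + 2) → ℝ) → ℝ≥0∞ :=
    fun y => ∏ j, g j (y ∘ j.succAbove) ^ ((1 : ℝ) / ((m : ℝ) + 1)) with hGdef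
  calc ∫⁻ x : EuclideanSpace ℝ (Fin (m + 2)),
          ∏ j : Fin (m + 2),
            (ENNReal.ofReal (f j (proj j x))) ^ ((1 : ℝ) / ((m : ℝ) + 1))
      = ∫⁻ x : EuclideanSpace ℝ (Fin (m + 2)), G (eE x) := by
        refine lintegral_congr fun x => Finset.prod_congr rfl fun j _ => ?_
        have hx : proj j x = eE'.symm (eE x ∘ j.succAbove) :=
          WithLp.ofLp_injective 2 (funext fun i => proj_eq j x i)
        rw [hx]
    _ = ∫⁻ y : Fin (m + 2) → ℝ, G y := hEq.lintegral_comp_emb eE.measurableEmbedding G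
    _ ≤ ∏ j : Fin (m + 2), (∫⁻ y : Fin (m + 1) → ℝ, g j y) ^ ((1 : ℝ) / ((m : ℝ) + 1)) := by
        exact LW_pi m g hg
    _ = ∏ j : Fin (m + 2),
          (∫⁻ y : EuclideanSpace ℝ (Fin (m + 1)), ENNReal.ofReal (f j y)) ^
            ((1 : ℝ) / ((m : ℝ) + 1)) := by
        refine Finset.prod_congr rfl fun j _ => ?_
        congr 1
        exact (hEq'.symm eE').lintegral_comp_emb eE'.symm.measurableEmbedding
          (fun y : EuclideanSpace ℝ (Fin (m + 1)) => ENNReal.ofReal (f j y))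
end
end

section
/- (Axis-parallel multilinear Kakeya) Let n ≥ 2 and suppose l_{j,a} are lines in ℝ^n, for j = 1, ..., n and a = 1, ..., N_j, such that each line l_{j,a} is exactly parallel to the x_j-axis. Then ∫_{ℝ^n} ∏_{j=1}^n ( Σ_{a=1}^{N_j} T_{j,a} )^{1/(n-1)} ≤ ω_{n-1}^{n/(n-1)} ∏_{j=1}^n N_j^{1/(n-1)}, where T_{j,a} is the characteristic function of the 1-neighborhood of l_{j,a} and ω_{n-1} is the Lebesgue measure of the unit ball in ℝ^{n-1}. -/
open MeasureTheory Finset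
open scoped ENNReal

noncomputable section

namespace KakeyaAux

variable {ι : Type*} [DecidableEq ι] {A : ι → Type*} [∀ i, MeasurableSpace (A i)]
  (μ : ∀ i, Measure (A i)) [∀ i, SigmaFinite (μ i)]

lemma lmarginal_update_invariant {f : (∀ i, A i) → ℝ≥0∞} (hf : Measurable f) {i : ι}
    (hind : ∀ x t, f (Function.update x i t) = f x) (s : Finset ι) (x : ∀ i, A i) (t : A i) :
    (∫⋯∫⁻_s, f ∂μ) (Function.update x i t) = (∫⋯∫⁻_s, f ∂μ) x := by
  by_cases hi : i ∈ s
  · exact lmarginal_update_of_mem μ hi f x t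
  · rw [lmarginal_update_of_notMem hf hi]
    congr 1
    funext y
    exact hind y t

lemma lw_aux [Fintype ι] {p : ℝ} (hp₀ : 0 ≤ p)
    (hp : ((Fintype.card ι : ℝ) - 1) * p = 1)
    (f : ι → (∀ i, A i) → ℝ≥0∞) (hf : ∀ i, Measurable (f i))
    (hind : ∀ i x t, f i (Function.update x i t) = f i x) (s : Finset ι) :
    ∫⋯∫⁻_s, (fun x => ∏ i, (f i x) ^ p) ∂μ
      ≤ fun x => ∏ i, ((∫⋯∫⁻_(s.erase i), f i ∂μ) x) ^ p := by
  have hcard : 2 ≤ Fintype.card ι := by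
    by_contra h
    push_neg at h
    interval_cases h' : Fintype.card ι <;> push_cast at hp <;> nlinarith
  have hmeasprod : Measurable (fun x => ∏ i, (f i x) ^ p) :=
    Finset.measurable_prod _ (fun i _ => (hf i).pow_const p)
  induction s using Finset.induction with
  | empty => simp
  | @insert i₀ s hi₀ ih =>
    set g : ι → (∀ i, A i) → ℝ≥0∞ := fun i => ∫⋯∫⁻_(s.erase i), f i ∂μ with hg
    have hgm : ∀ i, Measurable (g i) := fun i => (hf i).lmarginal μ
    intro x
    rw [lmarginal_insert _ hmeasprod hi₀]
    calc ∫⁻ t, (∫⋯∫⁻_s, (fun x => ∏ i, (f i x) ^ p) ∂μ) (Function.update x i₀ t) ∂μ i₀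
        ≤ ∫⁻ t, ∏ i, (g i (Function.update x i₀ t)) ^ p ∂μ i₀ := by
          apply lintegral_mono
          intro t
          exact ih (Function.update x i₀ t)
      _ = ∫⁻ t, (g i₀ x) ^ p * ∏ i ∈ univ.erase i₀, (g i (Function.update x i₀ t)) ^ p ∂μ i₀ := by
          congr 1; funext t
          rw [← Finset.mul_prod_erase univ _ (mem_univ i₀)]
          congr 2
          exact lmarginal_update_invariant μ (hf i₀) (hind i₀) _ x t
      _ = (g i₀ x) ^ p * ∫⁻ t, ∏ i ∈ univ.erase i₀, (g i (Function.update x i₀ t)) ^ p ∂μ i₀ := by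
          rw [lintegral_const_mul]
          exact Finset.measurable_prod _ (fun i _ =>
            ((hgm i).comp' (measurable_update x)).pow_const p)
      _ ≤ (g i₀ x) ^ p * ∏ i ∈ univ.erase i₀, (∫⁻ t, g i (Function.update x i₀ t) ∂μ i₀) ^ p := by
          gcongr
          apply ENNReal.lintegral_prod_norm_pow_le
          · exact fun i _ => ((hgm i).comp' (measurable_update x)).aemeasurable
          · rw [Finset.sum_const, Finset.card_erase_of_mem (mem_univ i₀), card_univ,
              nsmul_eq_mul]
            rw [← hp]
            congr 1
            have : 1 ≤ Fintype.card ι := by omega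
            push_cast [Nat.cast_sub this]
            ring
          · exact fun i _ => hp₀
      _ = ∏ i, ((∫⋯∫⁻_((insert i₀ s).erase i), f i ∂μ) x) ^ p := by
          rw [← Finset.mul_prod_erase univ
            (fun i => ((∫⋯∫⁻_((insert i₀ s).erase i), f i ∂μ) x) ^ p) (mem_univ i₀)]
          congr 1
          · rw [Finset.erase_insert hi₀]
            simp only [hg, Finset.erase_eq_of_notMem hi₀]
          · apply Finset.prod_congr rfl
            intro i hi
            rw [Finset.mem_erase] at hi
            congr 1
            have h1 : (insert i₀ s).erase i = {i₀} ∪ s.erase i := by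
              rw [Finset.erase_insert_of_ne hi.1.symm, Finset.insert_eq]
            rw [h1, lmarginal_union μ _ (hf i)
              (Finset.disjoint_singleton_left.mpr
                (fun h => hi₀ (Finset.mem_of_mem_erase h))), lmarginal_singleton]

/-- Loomis–Whitney-type inequality for functions each independent of one coordinate. -/
lemma loomis_whitney [Fintype ι] {p : ℝ} (hp₀ : 0 ≤ p)
    (hp : ((Fintype.card ι : ℝ) - 1) * p = 1)
    (f : ι → (∀ i, A i) → ℝ≥0∞) (hf : ∀ i, Measurable (f i))
    (hind : ∀ i x t, f i (Function.update x i t) = f i x) (x₀ : ∀ i, A i) :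
    ∫⁻ x, ∏ i, (f i x) ^ p ∂(Measure.pi μ)
      ≤ ∏ i, ((∫⋯∫⁻_(univ.erase i), f i ∂μ) x₀) ^ p := by
  rw [lintegral_eq_lmarginal_univ x₀]
  exact lw_aux μ hp₀ hp f hf hind univ x₀

end KakeyaAux

namespace KakeyaAux

lemma tube_set {n : ℕ} (j : Fin n) (c : EuclideanSpace ℝ (Fin n)) :
    {y : EuclideanSpace ℝ (Fin n) |
        Metric.infDist y (line c (EuclideanSpace.single j 1)) ≤ 1}
      = {y : EuclideanSpace ℝ (Fin n) | ∑ i ∈ univ.erase j, (y i - c i) ^ 2 ≤ 1} := by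
  have happ : ∀ (t : ℝ) (i : Fin n), (c + t • EuclideanSpace.single j (1:ℝ)) i
      = c i + t * (if i = j then 1 else 0) := by
    intro t i
    simp [EuclideanSpace.single_apply]
  have hkey : ∀ y : EuclideanSpace ℝ (Fin n),
      Metric.infDist y (line c (EuclideanSpace.single j 1))
        = Real.sqrt (∑ i ∈ univ.erase j, (y i - c i) ^ 2) := by
    intro y
    have hsum : ∀ t : ℝ, ∑ i, dist (y i) ((c + t • EuclideanSpace.single j (1:ℝ)) i) ^ 2
        = (y j - (c j + t)) ^ 2 + ∑ i ∈ univ.erase j, (y i - c i) ^ 2 := by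
      intro t
      rw [← Finset.add_sum_erase univ _ (mem_univ j)]
      congr 1
      · rw [happ, if_pos rfl, mul_one, Real.dist_eq, sq_abs]
      · apply Finset.sum_congr rfl
        intro i hi
        rw [happ, if_neg (Finset.ne_of_mem_erase hi), mul_zero, add_zero, Real.dist_eq, sq_abs]
    have hnn : (0:ℝ) ≤ ∑ i ∈ univ.erase j, (y i - c i) ^ 2 :=
      Finset.sum_nonneg (fun i _ => sq_nonneg _)
    apply le_antisymm
    · have hz : c + (y j - c j) • EuclideanSpace.single j (1:ℝ)
          ∈ line c (EuclideanSpace.single j 1) := ⟨_, rfl⟩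
      refine le_trans (Metric.infDist_le_dist_of_mem hz) ?_
      rw [EuclideanSpace.dist_eq, hsum]
      apply le_of_eq
      congr 1
      ring
    · by_contra h
      push_neg at h
      have hne : (line c (EuclideanSpace.single j (1:ℝ))).Nonempty := ⟨c, 0, by simp⟩
      obtain ⟨z, hz, hzlt⟩ := (Metric.infDist_lt_iff hne).mp h
      obtain ⟨t, rfl⟩ := hz
      rw [EuclideanSpace.dist_eq, hsum] at hzlt
      have : Real.sqrt (∑ i ∈ univ.erase j, (y i - c i) ^ 2)
          ≤ Real.sqrt ((y j - (c j + t)) ^ 2 + ∑ i ∈ univ.erase j, (y i - c i) ^ 2) :=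
        Real.sqrt_le_sqrt (by nlinarith [sq_nonneg (y j - (c j + t))])
      linarith
  ext y
  simp only [Set.mem_setOf_eq, hkey y, Real.sqrt_le_one]

end KakeyaAux

/-- Axis-parallel multilinear Kakeya: if each line `l_{j,a}` is exactly parallel to the
`x_j`-axis then `∫_{ℝⁿ} ∏_j (∑_a T_{j,a})^{1/(n-1)} ≤ ω_{n-1}^{n/(n-1)} ∏_j N_j^{1/(n-1)}`,
where `ω_{n-1}` is the volume of the unit ball in `ℝ^{n-1}`. -/
theorem axis_parallel_kakeya (n : ℕ) (hn : 2 ≤ n) (N : Fin n → ℕ)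
    (p : (j : Fin n) → Fin (N j) → EuclideanSpace ℝ (Fin n)) :
    ∫⁻ x : EuclideanSpace ℝ (Fin n),
        ∏ j : Fin n, (∑ a : Fin (N j),
          tubeFn (line (p j a) (EuclideanSpace.single j 1)) 1 x) ^ ((1 : ℝ) / ((n : ℝ) - 1))
      ≤ (volume (Metric.ball (0 : EuclideanSpace ℝ (Fin (n - 1))) 1)) ^
            ((n : ℝ) / ((n : ℝ) - 1)) *
          ∏ j : Fin n, (N j : ℝ≥0∞) ^ ((1 : ℝ) / ((n : ℝ) - 1)) := by
  classical
  have hn1 : (0:ℝ) < (n:ℝ) - 1 := by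
    have h2 : (2:ℝ) ≤ (n:ℝ) := by exact_mod_cast hn
    linarith
  set q : ℝ := (1:ℝ)/((n:ℝ)-1) with hq
  have hq0 : 0 ≤ q := by positivity
  set ω : ℝ≥0∞ := volume (Metric.ball (0 : EuclideanSpace ℝ (Fin (n-1))) 1) with hω
  set F : Fin n → (Fin n → ℝ) → ℝ≥0∞ := fun j y => ∑ a : Fin (N j),
      Set.indicator {y' : Fin n → ℝ | ∑ i ∈ univ.erase j, (y' i - p j a i)^2 ≤ 1} 1 y with hF
  have hSmeas : ∀ (j : Fin n) (a : Fin (N j)),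
      MeasurableSet {y' : Fin n → ℝ | ∑ i ∈ univ.erase j, (y' i - p j a i)^2 ≤ 1} := fun j a =>
    measurableSet_le (Finset.measurable_sum _
      (fun i _ => ((measurable_pi_apply i).sub_const _).pow_const 2)) measurable_const
  have hFmeas : ∀ j, Measurable (F j) := fun j =>
    Finset.measurable_sum _ (fun a _ => measurable_const.indicator (hSmeas j a))
  have hFind : ∀ (j : Fin n) (x : Fin n → ℝ) (t : ℝ),
      F j (Function.update x j t) = F j x := by
    intro j x t
    simp only [hF]
    refine Finset.sum_congr rfl (fun a _ => ?_)
    have hcond : (∑ i ∈ univ.erase j, (Function.update x j t i - p j a i)^2)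
        = ∑ i ∈ univ.erase j, (x i - p j a i)^2 :=
      Finset.sum_congr rfl (fun i hi => by
        rw [Function.update_of_ne (Finset.ne_of_mem_erase hi)])
    simp only [Set.indicator_apply, Set.mem_setOf_eq, hcond, Pi.one_apply]
  have hpres := EuclideanSpace.volume_preserving_symm_measurableEquiv_toLp (Fin n)
  have hstep1 : ∫⁻ x : EuclideanSpace ℝ (Fin n),
        ∏ j : Fin n, (∑ a : Fin (N j),
          tubeFn (line (p j a) (EuclideanSpace.single j 1)) 1 x) ^ q
      = ∫⁻ y : (Fin n → ℝ), ∏ j : Fin n, (F j y) ^ q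
          ∂(Measure.pi fun _ : Fin n => (volume : Measure ℝ)) := by
    rw [← MeasureTheory.volume_pi,
      ← hpres.lintegral_comp_emb (MeasurableEquiv.measurableEmbedding _)
        (fun y => ∏ j : Fin n, (F j y) ^ q)]
    apply lintegral_congr
    intro x
    refine Finset.prod_congr rfl (fun j _ => ?_)
    congr 1
    refine Finset.sum_congr rfl (fun a _ => ?_)
    rw [tubeFn, KakeyaAux.tube_set j (p j a)]
    rfl
  have hcardq : ((Fintype.card (Fin n) : ℝ) - 1) * q = 1 := by
    rw [Fintype.card_fin, hq]
    field_simp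
  have hLW := KakeyaAux.loomis_whitney (fun _ : Fin n => (volume : Measure ℝ))
    hq0 hcardq F hFmeas hFind (fun _ => 0)
  have hconst : ∀ j : Fin n,
      (∫⋯∫⁻_(univ.erase j), F j ∂(fun _ => (volume : Measure ℝ))) (fun _ => 0)
        = (N j : ℝ≥0∞) * ω := by
    intro j
    have hcardκ : Fintype.card ↥((univ.erase j : Finset (Fin n))) = n - 1 := by
      simp [Finset.card_erase_of_mem]
    haveI : Nonempty ↥((univ.erase j : Finset (Fin n))) := by
      rw [← Fintype.card_pos_iff, hcardκ]; omega
    haveI : Nonempty (Fin (n-1)) := ⟨⟨0, by omega⟩⟩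
    have hBmeas : ∀ a : Fin (N j), MeasurableSet
        {z : ↥((univ.erase j : Finset (Fin n))) → ℝ | ∑ i, (z i - p j a i.1)^2 ≤ 1} :=
      fun a => measurableSet_le (Finset.measurable_sum _
        (fun i _ => ((measurable_pi_apply i).sub_const _).pow_const 2)) measurable_const
    have hvol : ∀ a : Fin (N j),
        Measure.pi (fun _ : ↥((univ.erase j : Finset (Fin n))) => (volume : Measure ℝ))
          {z : ↥((univ.erase j : Finset (Fin n))) → ℝ | ∑ i, (z i - p j a i.1)^2 ≤ 1} = ω := by
      intro a
      set κ := ↥((univ.erase j : Finset (Fin n))) with hκ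
      set c' : EuclideanSpace ℝ κ := WithLp.toLp 2 (fun i => p j a i.1) with hc'
      have hpres2 := EuclideanSpace.volume_preserving_symm_measurableEquiv_toLp κ
      have hpre : (MeasurableEquiv.toLp 2 (κ → ℝ)).symm
            ⁻¹' {z : κ → ℝ | ∑ i, (z i - p j a i.1)^2 ≤ 1}
          = Metric.closedBall c' 1 := by
        ext x
        simp only [Set.mem_preimage, Set.mem_setOf_eq, Metric.mem_closedBall,
          EuclideanSpace.dist_eq]
        rw [show ((1:ℝ) = Real.sqrt 1) by rw [Real.sqrt_one],
          Real.sqrt_le_sqrt_iff (by positivity), Real.sqrt_one]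
        constructor <;> intro h <;> refine le_trans (le_of_eq ?_) h <;>
          refine Finset.sum_congr rfl (fun i _ => ?_) <;>
          rw [Real.dist_eq, sq_abs] <;> rfl
      calc Measure.pi (fun _ : κ => (volume : Measure ℝ))
            {z : κ → ℝ | ∑ i, (z i - p j a i.1)^2 ≤ 1}
          = volume ((MeasurableEquiv.toLp 2 (κ → ℝ)).symm
              ⁻¹' {z : κ → ℝ | ∑ i, (z i - p j a i.1)^2 ≤ 1}) := by
            rw [← MeasureTheory.volume_pi]
            exact (hpres2.measure_preimage (hBmeas a).nullMeasurableSet).symm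
        _ = volume (Metric.closedBall c' 1) := by rw [hpre]
        _ = ω := by
            rw [EuclideanSpace.volume_closedBall, hω, EuclideanSpace.volume_ball]
            rw [hcardκ, Fintype.card_fin]
    have hunfold : (∫⋯∫⁻_(univ.erase j), F j ∂(fun _ => (volume : Measure ℝ))) (fun _ => 0)
        = ∫⁻ z : (i : ↥((univ.erase j : Finset (Fin n)))) → ℝ,
            ∑ a : Fin (N j), Set.indicator
              {z' : ↥((univ.erase j : Finset (Fin n))) → ℝ | ∑ i, (z' i - p j a i.1)^2 ≤ 1} 1 z
            ∂Measure.pi (fun _ => (volume : Measure ℝ)) := by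
      refine lintegral_congr (fun z => ?_)
      simp only [hF]
      refine Finset.sum_congr rfl (fun a _ => ?_)
      have hcond : ∑ i ∈ univ.erase j,
          (Function.updateFinset (fun _ => (0:ℝ)) (univ.erase j) z i - p j a i)^2
          = ∑ i : ↥((univ.erase j : Finset (Fin n))), (z i - p j a i.1)^2 := by
        rw [← Finset.sum_coe_sort (univ.erase j)
          (fun i => (Function.updateFinset (fun _ => (0:ℝ)) (univ.erase j) z i - p j a i)^2)]
        refine Finset.sum_congr rfl (fun i _ => ?_)
        congr 2
        simp [Function.updateFinset, i.2]
      simp only [Set.indicator_apply, Set.mem_setOf_eq, hcond, Pi.one_apply]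
    rw [hunfold, lintegral_finset_sum univ
      (f := fun (a : Fin (N j)) (z : ↥((univ.erase j : Finset (Fin n))) → ℝ) => Set.indicator
        {z' : ↥((univ.erase j : Finset (Fin n))) → ℝ | ∑ i, (z' i - p j a i.1)^2 ≤ 1} 1 z)
      (fun a _ => measurable_const.indicator (hBmeas a))]
    have : ∀ a : Fin (N j),
        (∫⁻ z, Set.indicator
          {z' : ↥((univ.erase j : Finset (Fin n))) → ℝ | ∑ i, (z' i - p j a i.1)^2 ≤ 1} 1 z
          ∂Measure.pi (fun _ => (volume : Measure ℝ))) = ω := by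
      intro a
      rw [lintegral_indicator_one (hBmeas a)]
      exact hvol a
    simp only [this, Finset.sum_const, card_univ, Fintype.card_fin, nsmul_eq_mul]
  calc ∫⁻ x : EuclideanSpace ℝ (Fin n),
        ∏ j : Fin n, (∑ a : Fin (N j),
          tubeFn (line (p j a) (EuclideanSpace.single j 1)) 1 x) ^ q
      = ∫⁻ y : (Fin n → ℝ), ∏ j : Fin n, (F j y) ^ q
          ∂(Measure.pi fun _ : Fin n => (volume : Measure ℝ)) := hstep1
    _ ≤ ∏ j : Fin n, ((∫⋯∫⁻_(univ.erase j), F j ∂(fun _ => (volume : Measure ℝ)))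
          (fun _ => 0)) ^ q := hLW
    _ = ∏ j : Fin n, ((N j : ℝ≥0∞) * ω) ^ q := by
        exact Finset.prod_congr rfl (fun j _ => by rw [hconst j])
    _ = ∏ j : Fin n, ((N j : ℝ≥0∞) ^ q * ω ^ q) :=
        Finset.prod_congr rfl (fun j _ => ENNReal.mul_rpow_of_nonneg _ _ hq0)
    _ = (∏ j : Fin n, (N j : ℝ≥0∞) ^ q) * ((ω ^ q) ^ (n : ℕ)) := by
        rw [Finset.prod_mul_distrib, Finset.prod_const, card_univ, Fintype.card_fin]
    _ = ω ^ ((n:ℝ)/((n:ℝ)-1)) * ∏ j : Fin n, (N j : ℝ≥0∞) ^ q := by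
        rw [← ENNReal.rpow_natCast (ω ^ q) n, ← ENNReal.rpow_mul, mul_comm]
        congr 2
        rw [hq]
        field_simp
end
end

section
/- (Scaled axis-parallel multilinear Kakeya) Let n ≥ 2, W > 0, and suppose l_{j,a} are lines in ℝ^n, for j = 1, ..., n and a = 1, ..., N_j, such that each line l_{j,a} is exactly parallel to the x_j-axis. Then ∫_{ℝ^n} ∏_{j=1}^n ( Σ_{a=1}^{N_j} T_{j,a,W} )^{1/(n-1)} ≤ ω_{n-1}^{n/(n-1)} W^n ∏_{j=1}^n N_j^{1/(n-1)}, where T_{j,a,W} is the characteristic function of the W-neighborhood of l_{j,a} and ω_{n-1} is the Lebesgue measure of the unit ball in ℝ^{n-1}. -/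
open MeasureTheory Finset
open scoped ENNReal

noncomputable section

theorem infDist_line_le_iff {n : ℕ} (j : Fin n) (c : EuclideanSpace ℝ (Fin n)) {W : ℝ}
    (hW : 0 ≤ W) (x : EuclideanSpace ℝ (Fin n)) :
    Metric.infDist x (line c (EuclideanSpace.single j 1)) ≤ W ↔
      ∑ i ∈ univ.erase j, (x i - c i) ^ 2 ≤ W ^ 2 := by
  have hne : (line c (EuclideanSpace.single j 1)).Nonempty := ⟨c, 0, by simp⟩
  have hdist : ∀ t : ℝ, dist x (c + t • EuclideanSpace.single j 1)
      = Real.sqrt ((x j - (c j + t)) ^ 2 + ∑ i ∈ univ.erase j, (x i - c i) ^ 2) := by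
    intro t
    rw [EuclideanSpace.dist_eq]
    congr 1
    rw [← Finset.add_sum_erase _ _ (mem_univ j)]
    congr 1
    · simp [Real.dist_eq, PiLp.add_apply, PiLp.smul_apply, smul_eq_mul,
        EuclideanSpace.single_apply, sq_abs]
    · refine Finset.sum_congr rfl fun i hi => ?_
      simp [Real.dist_eq, PiLp.add_apply, PiLp.smul_apply, smul_eq_mul,
        EuclideanSpace.single_apply, Finset.ne_of_mem_erase hi, sq_abs]
  have hinf : Metric.infDist x (line c (EuclideanSpace.single j 1))
      = Real.sqrt (∑ i ∈ univ.erase j, (x i - c i) ^ 2) := by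
    apply le_antisymm
    · have hmem : c + (x j - c j) • EuclideanSpace.single j 1
          ∈ line c (EuclideanSpace.single j 1) := ⟨_, rfl⟩
      refine le_trans (Metric.infDist_le_dist_of_mem hmem) ?_
      rw [hdist]
      have : (x j - (c j + (x j - c j))) ^ 2 = 0 := by ring
      rw [this, zero_add]
    · rw [Metric.infDist_eq_iInf]
      have := hne.to_subtype
      refine le_ciInf fun z => ?_
      obtain ⟨y, t, rfl⟩ := z
      rw [hdist]
      apply Real.sqrt_le_sqrt
      nlinarith [sq_nonneg (x j - (c j + t))]
  rw [hinf, Real.sqrt_le_left hW]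

theorem myLW {ι : Type*} [Fintype ι] [DecidableEq ι] {A : ι → Type*}
    [∀ i, MeasurableSpace (A i)] (μ : ∀ i, Measure (A i)) [∀ i, SigmaFinite (μ i)]
    {p : ℝ} (hp0 : 0 ≤ p) (hp : ((Fintype.card ι : ℝ) - 1) * p = 1)
    (f : ι → (∀ i, A i) → ℝ≥0∞) (hf : ∀ i, Measurable (f i))
    (hindep : ∀ j (z : ∀ i, A i) (y : A j), f j (Function.update z j y) = f j z)
    (s : Finset ι) (x : ∀ i, A i) :
    (∫⋯∫⁻_s, (fun z => ∏ j, f j z ^ p) ∂μ) x ≤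
      ∏ j, ((∫⋯∫⁻_(s.erase j), f j ∂μ) x) ^ p := by
  induction s using Finset.induction generalizing x with
  | empty => simp
  | @insert k s hk ih =>
    have hmf : Measurable fun z => ∏ j, f j z ^ p :=
      Finset.measurable_prod _ fun j _ => (hf j).pow_const p
    have hGmeas : ∀ j : ι, Measurable (∫⋯∫⁻_(s.erase j), f j ∂μ) := fun j => (hf j).lmarginal μ
    have hsk : s.erase k = s := Finset.erase_eq_of_notMem hk
    have hins_k : (insert k s).erase k = s := Finset.erase_insert hk
    have key_k : ∀ y, (∫⋯∫⁻_(s.erase k), f k ∂μ) (Function.update x k y)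
        = (∫⋯∫⁻_s, f k ∂μ) x := by
      intro y
      rw [hsk, lmarginal_update_of_notMem (hf k) hk]
      congr 1
      ext z
      exact hindep k z y
    rw [lmarginal_insert _ hmf hk]
    calc ∫⁻ y, (∫⋯∫⁻_s, (fun z => ∏ j, f j z ^ p) ∂μ) (Function.update x k y) ∂μ k
        ≤ ∫⁻ y, ∏ j, ((∫⋯∫⁻_(s.erase j), f j ∂μ) (Function.update x k y)) ^ p ∂μ k :=
          lintegral_mono fun y => ih _
      _ = ∫⁻ y, ((∫⋯∫⁻_s, f k ∂μ) x) ^ p *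
            ∏ j ∈ univ.erase k,
              ((∫⋯∫⁻_(s.erase j), f j ∂μ) (Function.update x k y)) ^ p ∂μ k := by
          congr 1; ext y
          rw [← Finset.mul_prod_erase univ _ (mem_univ k), key_k y]
      _ = ((∫⋯∫⁻_s, f k ∂μ) x) ^ p *
            ∫⁻ y, ∏ j ∈ univ.erase k,
              ((∫⋯∫⁻_(s.erase j), f j ∂μ) (Function.update x k y)) ^ p ∂μ k := by
          rw [lintegral_const_mul]
          exact Finset.measurable_prod _ fun j _ =>
            ((hGmeas j).comp (measurable_update x)).pow_const p
      _ ≤ ((∫⋯∫⁻_s, f k ∂μ) x) ^ p *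
            ∏ j ∈ univ.erase k,
              (∫⁻ y, (∫⋯∫⁻_(s.erase j), f j ∂μ) (Function.update x k y) ∂μ k) ^ p := by
          gcongr
          refine ENNReal.lintegral_prod_norm_pow_le _ (fun j _ =>
            ((hGmeas j).comp (measurable_update x)).aemeasurable) ?_ (fun j _ => hp0)
          rw [Finset.sum_const, nsmul_eq_mul, Finset.card_erase_of_mem (mem_univ k),
            Finset.card_univ, ← hp]
          congr 1
          have : (1:ℕ) ≤ Fintype.card ι := Fintype.card_pos_iff.2 ⟨k⟩
          push_cast [Nat.cast_sub this]
          ring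
      _ = ∏ j, ((∫⋯∫⁻_((insert k s).erase j), f j ∂μ) x) ^ p := by
          rw [← Finset.mul_prod_erase univ
            (fun j => ((∫⋯∫⁻_((insert k s).erase j), f j ∂μ) x) ^ p) (mem_univ k), hins_k]
          congr 1
          refine Finset.prod_congr rfl fun j hj => ?_
          have hjk : j ≠ k := Finset.ne_of_mem_erase hj
          have hknotin : k ∉ s.erase j := fun h => hk (Finset.mem_of_mem_erase h)
          rw [← lmarginal_insert _ (hf j) hknotin x, Finset.erase_insert_of_ne hjk.symm]

/-- measure of the coordinate-ball cylinder slice -/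
theorem pi_ball_measure {n : ℕ} (s : Finset (Fin n)) (hcard : s.card = n - 1)
    (c : Fin n → ℝ) {W : ℝ} (hW : 0 ≤ W) :
    (Measure.pi fun _ : {i // i ∈ s} => (volume : Measure ℝ))
      {v : {i // i ∈ s} → ℝ | ∑ i, (v i - c i.1) ^ 2 ≤ W ^ 2}
    = ENNReal.ofReal (W ^ (n - 1)) *
        volume (Metric.ball (0 : EuclideanSpace ℝ (Fin (n - 1))) 1) := by
  classical
  have hcard' : Fintype.card {i // i ∈ s} = n - 1 := by
    rw [Fintype.card_coe, hcard]
  set e1 : Fin (n - 1) ≃ {i // i ∈ s} := (Fintype.equivFinOfCardEq hcard').symm with he1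
  have hB : MeasurableSet {v : {i // i ∈ s} → ℝ | ∑ i, (v i - c i.1) ^ 2 ≤ W ^ 2} :=
    measurableSet_le (Finset.measurable_sum _ fun i _ =>
      ((measurable_pi_apply i).sub measurable_const).pow_const 2) measurable_const
  have vp1 := measurePreserving_piCongrLeft
    (fun _ : {i // i ∈ s} => (volume : Measure ℝ)) e1
  rw [← vp1.measure_preimage hB.nullMeasurableSet]
  have hpre : (MeasurableEquiv.piCongrLeft (fun _ => ℝ) e1) ⁻¹'
      {v : {i // i ∈ s} → ℝ | ∑ i, (v i - c i.1) ^ 2 ≤ W ^ 2}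
      = {v : Fin (n - 1) → ℝ | ∑ k, (v k - c (e1 k).1) ^ 2 ≤ W ^ 2} := by
    ext v
    simp only [Set.mem_preimage, Set.mem_setOf_eq]
    have : ∑ i, ((MeasurableEquiv.piCongrLeft (fun _ => ℝ) e1) v i - c i.1) ^ 2
        = ∑ k, (v k - c (e1 k).1) ^ 2 := by
      refine (Fintype.sum_equiv e1 _ _ fun k => ?_).symm
      rw [MeasurableEquiv.piCongrLeft_apply_apply]
    rw [this]
  rw [hpre]
  have vp2 := EuclideanSpace.volume_preserving_symm_measurableEquiv_toLp (Fin (n - 1))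
  have hB2 : MeasurableSet {v : Fin (n - 1) → ℝ | ∑ k, (v k - c (e1 k).1) ^ 2 ≤ W ^ 2} :=
    measurableSet_le (Finset.measurable_sum _ fun i _ =>
      ((measurable_pi_apply i).sub measurable_const).pow_const 2) measurable_const
  rw [show (Measure.pi fun _ : Fin (n - 1) => (volume : Measure ℝ))
      = (volume : Measure (Fin (n - 1) → ℝ)) from (volume_pi).symm,
    ← vp2.measure_preimage hB2.nullMeasurableSet]
  have hball : (MeasurableEquiv.toLp 2 (Fin (n - 1) → ℝ)).symm ⁻¹'
      {v : Fin (n - 1) → ℝ | ∑ k, (v k - c (e1 k).1) ^ 2 ≤ W ^ 2}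
      = Metric.closedBall (WithLp.equiv 2 _ |>.symm (fun k => c (e1 k).1)) W := by
    ext z
    simp only [Set.mem_preimage, Set.mem_setOf_eq, Metric.mem_closedBall]
    rw [EuclideanSpace.dist_eq, Real.sqrt_le_left hW]
    simp [Real.dist_eq, sq_abs, MeasurableEquiv.coe_toLp_symm]
  rw [hball, Measure.addHaar_closedBall _ _ hW, finrank_euclideanSpace_fin]

/-- Scaled axis-parallel multilinear Kakeya: for tubes of radius `W > 0` around lines
exactly parallel to the axes,
`∫_{ℝⁿ} ∏_j (∑_a T_{j,a,W})^{1/(n-1)} ≤ ω_{n-1}^{n/(n-1)} Wⁿ ∏_j N_j^{1/(n-1)}`. -/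
theorem axis_parallel_kakeya_scaled (n : ℕ) (hn : 2 ≤ n) (W : ℝ) (hW : 0 < W)
    (N : Fin n → ℕ) (p : (j : Fin n) → Fin (N j) → EuclideanSpace ℝ (Fin n)) :
    ∫⁻ x : EuclideanSpace ℝ (Fin n),
        ∏ j : Fin n, (∑ a : Fin (N j),
          tubeFn (line (p j a) (EuclideanSpace.single j 1)) W x) ^ ((1 : ℝ) / ((n : ℝ) - 1))
      ≤ (volume (Metric.ball (0 : EuclideanSpace ℝ (Fin (n - 1))) 1)) ^
            ((n : ℝ) / ((n : ℝ) - 1)) * ENNReal.ofReal (W ^ n) *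
          ∏ j : Fin n, (N j : ℝ≥0∞) ^ ((1 : ℝ) / ((n : ℝ) - 1)) := by
  classical
  have hn1 : (1:ℝ) ≤ (n:ℝ) - 1 := by
    have : (2:ℝ) ≤ (n:ℝ) := by exact_mod_cast hn
    linarith
  set q : ℝ := (1:ℝ)/((n:ℝ)-1) with hq
  have hq0 : 0 ≤ q := by positivity
  have hqp : ((n:ℝ) - 1) * q = 1 := by
    rw [hq]; field_simp
  -- cylinder sets on the pi side
  set S : (j : Fin n) → Fin (N j) → Set (Fin n → ℝ) :=
    fun j a => {u | ∑ i ∈ univ.erase j, (u i - p j a i) ^ 2 ≤ W ^ 2} with hS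
  have hSmeas : ∀ j a, MeasurableSet (S j a) := fun j a =>
    measurableSet_le (Finset.measurable_sum _ fun i _ =>
      ((measurable_pi_apply i).sub measurable_const).pow_const 2) measurable_const
  set F : (j : Fin n) → (Fin n → ℝ) → ℝ≥0∞ :=
    fun j u => ∑ a, Set.indicator (S j a) 1 u with hF
  have hFmeas : ∀ j, Measurable (F j) := fun j =>
    Finset.measurable_sum _ fun a _ => measurable_const.indicator (hSmeas j a)
  have hFindep : ∀ j (z : Fin n → ℝ) (y : ℝ), F j (Function.update z j y) = F j z := by
    intro j z y
    refine Finset.sum_congr rfl fun a _ => ?_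
    have : ∑ i ∈ univ.erase j, (Function.update z j y i - p j a i) ^ 2
        = ∑ i ∈ univ.erase j, (z i - p j a i) ^ 2 :=
      Finset.sum_congr rfl fun i hi => by
        rw [Function.update_of_ne (Finset.ne_of_mem_erase hi)]
    simp only [Set.indicator_apply, hS, Set.mem_setOf_eq, Pi.one_apply]
    exact if_congr (by rw [this]) rfl rfl
  -- pointwise identification of the tube functions
  have htube : ∀ (j : Fin n) (a : Fin (N j)) (y : EuclideanSpace ℝ (Fin n)),
      tubeFn (line (p j a) (EuclideanSpace.single j 1)) W y
        = Set.indicator (S j a) 1 (fun i => y i) := by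
    intro j a y
    simp only [tubeFn, Set.indicator_apply, Set.mem_setOf_eq, hS]
    exact if_congr (infDist_line_le_iff j (p j a) hW.le y) rfl rfl
  -- transfer the integral to the pi side
  have htrans :
      (∫⁻ x : EuclideanSpace ℝ (Fin n), ∏ j : Fin n, (∑ a : Fin (N j),
          tubeFn (line (p j a) (EuclideanSpace.single j 1)) W x) ^ q)
      = ∫⁻ u : Fin n → ℝ, ∏ j, (F j u) ^ q ∂(Measure.pi fun _ => volume) := by
    rw [show (Measure.pi fun _ : Fin n => (volume : Measure ℝ))
        = (volume : Measure (Fin n → ℝ)) from (volume_pi).symm]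
    rw [MeasurePreserving.lintegral_map_equiv _ (MeasurableEquiv.toLp 2 (Fin n → ℝ))
      (EuclideanSpace.volume_preserving_symm_measurableEquiv_toLp (Fin n)).symm]
    congr 1
    ext u
    refine Finset.prod_congr rfl fun j _ => ?_
    congr 1
    refine Finset.sum_congr rfl fun a _ => ?_
    rw [htube]
    rfl
  rw [htrans]
  set x₀ : Fin n → ℝ := fun _ => 0 with hx₀
  have hcardι : ((Fintype.card (Fin n) : ℝ) - 1) * q = 1 := by
    rw [Fintype.card_fin]; exact hqp
  calc ∫⁻ u : Fin n → ℝ, ∏ j, (F j u) ^ q ∂(Measure.pi fun _ => volume)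
      = (∫⋯∫⁻_univ, (fun u => ∏ j, F j u ^ q) ∂fun _ => volume) x₀ :=
        lintegral_eq_lmarginal_univ x₀
    _ ≤ ∏ j, ((∫⋯∫⁻_(univ.erase j), F j ∂fun _ => volume) x₀) ^ q :=
        myLW _ hq0 hcardι F hFmeas hFindep univ x₀
    _ ≤ _ := ?_
  -- compute each marginal
  have hmarg : ∀ j : Fin n, (∫⋯∫⁻_(univ.erase j), F j ∂fun _ => volume) x₀
      = (N j : ℝ≥0∞) * (ENNReal.ofReal (W ^ (n-1)) *
          volume (Metric.ball (0 : EuclideanSpace ℝ (Fin (n - 1))) 1)) := by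
    intro j
    have hcard : (univ.erase j).card = n - 1 := by
      simp [Finset.card_erase_of_mem]
    rw [lmarginal]
    have hpt : ∀ y : (i : (univ.erase j : Finset (Fin n))) → ℝ,
        F j (Function.updateFinset x₀ (univ.erase j) y)
          = ∑ a, Set.indicator
              {v : {i // i ∈ univ.erase j} → ℝ | ∑ i, (v i - p j a i.1) ^ 2 ≤ W ^ 2} 1 y := by
      intro y
      refine Finset.sum_congr rfl fun a _ => ?_
      have : ∑ i ∈ univ.erase j, (Function.updateFinset x₀ (univ.erase j) y i - p j a i) ^ 2
          = ∑ i : {i // i ∈ univ.erase j}, (y i - p j a i.1) ^ 2 := by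
        rw [← Finset.sum_attach (univ.erase j)
          (fun i => (Function.updateFinset x₀ (univ.erase j) y i - p j a i) ^ 2)]
        refine Finset.sum_congr rfl fun i _ => ?_
        congr 2
        simp [Function.updateFinset_def, i.2]
      simp only [Set.indicator_apply, hS, Set.mem_setOf_eq, Pi.one_apply]
      exact if_congr (Iff.of_eq (by rw [this]; congr!)) rfl rfl
    rw [lintegral_congr hpt]
    refine ((lintegral_finset_sum _ (fun a _ => measurable_const.indicator
      (measurableSet_le (Finset.measurable_sum _ fun i _ =>
        ((measurable_pi_apply i).sub measurable_const).pow_const 2)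
        measurable_const))).trans ?_)
    trans ∑ _a : Fin (N j), (ENNReal.ofReal (W ^ (n-1)) *
        volume (Metric.ball (0 : EuclideanSpace ℝ (Fin (n - 1))) 1))
    · refine Finset.sum_congr rfl fun a _ => ?_
      refine (lintegral_indicator_one (measurableSet_le (Finset.measurable_sum _ fun i _ =>
        ((measurable_pi_apply i).sub measurable_const).pow_const 2)
        measurable_const)).trans ?_
      convert pi_ball_measure (univ.erase j) hcard (p j a) hW.le using 2 <;> congr!
    · rw [Finset.sum_const, Finset.card_univ, Fintype.card_fin, nsmul_eq_mul]
  simp_rw [hmarg]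
  -- final arithmetic
  set ω := volume (Metric.ball (0 : EuclideanSpace ℝ (Fin (n - 1))) 1) with hω
  have harith : ∏ j : Fin n, ((N j : ℝ≥0∞) * (ENNReal.ofReal (W ^ (n-1)) * ω)) ^ q
      = (∏ j : Fin n, (N j : ℝ≥0∞) ^ q) *
          ((ENNReal.ofReal (W ^ (n-1)) * ω) ^ q) ^ n := by
    simp_rw [ENNReal.mul_rpow_of_nonneg _ _ hq0]
    rw [Finset.prod_mul_distrib, Finset.prod_const, Finset.card_univ, Fintype.card_fin]
  rw [harith]
  have hKey : ((ENNReal.ofReal (W ^ (n-1)) * ω) ^ q) ^ n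
      = ENNReal.ofReal (W ^ n) * ω ^ ((n:ℝ)/((n:ℝ)-1)) := by
    rw [← ENNReal.rpow_natCast ((ENNReal.ofReal (W ^ (n-1)) * ω) ^ q) n, ← ENNReal.rpow_mul,
      ENNReal.mul_rpow_of_nonneg _ _ (by positivity : (0:ℝ) ≤ q * n)]
    congr 1
    · rw [ENNReal.ofReal_pow hW.le, ← ENNReal.rpow_natCast (ENNReal.ofReal W) (n-1),
        ← ENNReal.rpow_mul]
      have hcast : ((n - 1 : ℕ) : ℝ) = (n:ℝ) - 1 := by
        have : (1:ℕ) ≤ n := by omega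
        push_cast [Nat.cast_sub this]
        ring
      rw [hcast]
      have : ((n:ℝ) - 1) * (q * n) = (n:ℝ) := by
        have := hqp
        nlinarith [hqp]
      rw [this, ENNReal.rpow_natCast, ENNReal.ofReal_pow hW.le]
    · congr 1
      rw [hq]
      field_simp
  rw [hKey]
  apply le_of_eq
  ring
end
end

section
/- (Main scale-step lemma) For every n ≥ 2 there is a constant C_n depending only on n such that the following holds. Let 0 < δ ≤ 1/2, W > 0, and suppose l_{j,a} are lines in ℝ^n, for j = 1, ..., n and a = 1, ..., N_j, each making an angle of at most δ with the x_j-axis. Let T_{j,a,W} be the characteristic function of the W-neighborhood of l_{j,a} and set f_{j,W} = Σ_{a=1}^{N_j} T_{j,a,W}. If S ≥ δ^{-1} W and Q_S is any axis-parallel cube of side length S, then ∫_{Q_S} ∏_{j=1}^n f_{j,W}^{1/(n-1)} ≤ C_n δ^n ∫_{Q_S} ∏_{j=1}^n f_{j,δ^{-1}W}^{1/(n-1)}. -/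
open MeasureTheory Finset
open scoped ENNReal

set_option maxHeartbeats 1000000
noncomputable section

open Function


theorem measurable_coord {n : ℕ} (i : Fin n) :
    Measurable fun x : EuclideanSpace ℝ (Fin n) => x i :=
  (measurable_pi_apply i).comp ((MeasurableEquiv.toLp 2 (Fin n → ℝ)).symm).measurable

theorem measurable_tubeFn {n : ℕ} (A : Set (EuclideanSpace ℝ (Fin n))) (W : ℝ) :
    Measurable (tubeFn A W) := by
  apply Measurable.indicator measurable_const
  exact IsClosed.measurableSet (isClosed_le (Metric.continuous_infDist_pt A) continuous_const)

theorem measurable_tubeprod {n : ℕ} (N : Fin n → ℕ)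
    (p v : (j : Fin n) → Fin (N j) → EuclideanSpace ℝ (Fin n)) (W q : ℝ) :
    Measurable (fun x : EuclideanSpace ℝ (Fin n) =>
      ∏ j, (∑ a : Fin (N j), tubeFn (line (p j a) (v j a)) W x) ^ q) :=
  Finset.measurable_prod _ (fun j _ =>
    (Finset.measurable_sum _ fun a _ => measurable_tubeFn _ _).pow_const q)



theorem coord_abs_le_dist {n : ℕ} (x y : EuclideanSpace ℝ (Fin n)) (i : Fin n) :
    |x i - y i| ≤ dist x y := by
  rw [EuclideanSpace.dist_eq]
  rw [← Real.sqrt_sq_eq_abs]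
  apply Real.sqrt_le_sqrt
  calc (x i - y i) ^ 2 = dist (x i) (y i) ^ 2 := by rw [Real.dist_eq, sq_abs]
    _ ≤ ∑ i', dist (x i') (y i') ^ 2 :=
        Finset.single_le_sum (f := fun i' => dist (x i') (y i') ^ 2)
          (fun i' _ => sq_nonneg _) (mem_univ i)

theorem dist_le_of_coord {n : ℕ} (x y : EuclideanSpace ℝ (Fin n)) {L : ℝ} (hL : 0 ≤ L)
    (h : ∀ i, |x i - y i| ≤ L) : dist x y ≤ n * L := by
  rw [EuclideanSpace.dist_eq]
  have h1 : ∑ i, dist (x i) (y i) ^ 2 ≤ (n * L) ^ 2 := by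
    calc ∑ i, dist (x i) (y i) ^ 2 ≤ ∑ _i : Fin n, L ^ 2 := by
          refine Finset.sum_le_sum fun i _ => ?_
          have := h i
          rw [Real.dist_eq]
          nlinarith [abs_nonneg (x i - y i)]
      _ = n * L ^ 2 := by rw [Finset.sum_const, Finset.card_univ, Fintype.card_fin,
            nsmul_eq_mul]
      _ ≤ (n * L) ^ 2 := by
          have : (1 : ℝ) ≤ n ∨ (n : ℝ) = 0 := by
            rcases Nat.eq_zero_or_pos n with h0 | h0
            · exact Or.inr (by exact_mod_cast h0)
            · exact Or.inl (by exact_mod_cast h0)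
          rcases this with h0 | h0 <;> nlinarith [sq_nonneg L]
  calc Real.sqrt (∑ i, dist (x i) (y i) ^ 2) ≤ Real.sqrt ((n * L) ^ 2) :=
        Real.sqrt_le_sqrt h1
    _ = n * L := Real.sqrt_sq (by positivity)

theorem direction_coords {n : ℕ} {v : EuclideanSpace ℝ (Fin n)} {j : Fin n} {δ : ℝ}
    (hδ : 0 < δ) (hδ2 : δ ≤ 1 / 2) (hv : ‖v‖ = 1)
    (ha : InnerProductGeometry.angle v (EuclideanSpace.single j 1) ≤ δ) :
    1 / 2 ≤ v j ∧ ∀ i, i ≠ j → |v i| ≤ δ := by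
  have hsum : ∑ i, v i ^ 2 = 1 := by
    have h := EuclideanSpace.norm_eq v
    rw [hv] at h
    have h2 : Real.sqrt (∑ i, ‖v i‖ ^ 2) = 1 := h.symm
    have h3 : ∑ i, ‖v i‖ ^ 2 = 1 := by
      have := congrArg (· ^ 2) h2
      simpa [Real.sq_sqrt (Finset.sum_nonneg fun i _ => sq_nonneg _)] using this
    simpa [Real.norm_eq_abs, sq_abs] using h3
  have hvj2 : v j ^ 2 ≤ 1 := by
    rw [← hsum]
    exact Finset.single_le_sum (f := fun i => v i ^ 2) (fun i _ => sq_nonneg _) (mem_univ j)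
  have hvj1 : -1 ≤ v j ∧ v j ≤ 1 := abs_le.1 (by nlinarith [sq_abs (v j), abs_nonneg (v j)])
  have hinner : (inner ℝ v (EuclideanSpace.single j (1:ℝ)) : ℝ) = v j := by
    rw [EuclideanSpace.inner_single_right]
    simp
  have hangle : Real.arccos (v j) ≤ δ := by
    have := ha
    rw [InnerProductGeometry.angle] at this
    rw [hinner, hv, EuclideanSpace.norm_single] at this
    simpa using this
  have hcos : Real.cos δ ≤ v j := by
    have h1 : Real.cos δ ≤ Real.cos (Real.arccos (v j)) := by
      apply Real.cos_le_cos_of_nonneg_of_le_pi (Real.arccos_nonneg _) ?_ hangle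
      linarith [Real.pi_gt_three]
    rwa [Real.cos_arccos hvj1.1 hvj1.2] at h1
  have hcosge : 1 - δ ^ 2 / 2 ≤ Real.cos δ := Real.one_sub_sq_div_two_le_cos
  have hvjge : 1 - δ ^ 2 / 2 ≤ v j := le_trans hcosge hcos
  constructor
  · nlinarith
  · intro i hij
    have hsq : v i ^ 2 ≤ 1 - v j ^ 2 := by
      have h5 : ∑ i' ∈ ({j, i} : Finset (Fin n)), v i' ^ 2 ≤ ∑ i', v i' ^ 2 :=
        Finset.sum_le_sum_of_subset_of_nonneg (Finset.subset_univ _)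
          (fun i' _ _ => sq_nonneg _)
      rw [Finset.sum_pair (Ne.symm hij)] at h5
      linarith [hsum ▸ h5]
    have : v i ^ 2 ≤ δ ^ 2 := by nlinarith
    calc |v i| = Real.sqrt (v i ^ 2) := (Real.sqrt_sq_eq_abs _).symm
      _ ≤ Real.sqrt (δ ^ 2) := Real.sqrt_le_sqrt this
      _ = δ := Real.sqrt_sq hδ.le

theorem slab_bound {n : ℕ} {δ W L : ℝ} (hδ : 0 < δ) (hδ2 : δ ≤ 1 / 2) (hW : 0 < W)
    (hLle : L ≤ δ⁻¹ * W / (2 * n))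
    {p v : EuclideanSpace ℝ (Fin n)} {j : Fin n} (hvj : 1 / 2 ≤ v j)
    (hvi : ∀ i, i ≠ j → |v i| ≤ δ)
    {c' x : EuclideanSpace ℝ (Fin n)} (hx : ∀ i, x i ∈ Set.Icc (c' i) (c' i + L))
    (hdist : Metric.infDist x (line p v) ≤ W) :
    ∀ i, i ≠ j → |x i - (p i + ((c' j - p j) / v j) * v i)| ≤ 8 * W := by
  have hn1 : (1 : ℝ) ≤ n := by exact_mod_cast j.pos
  have hL0 : 0 ≤ L := by have := hx j; simp at this; linarith [this.1, this.2]
  have hne : (line p v).Nonempty := ⟨p, 0, by simp⟩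
  have h2 : Metric.infDist x (line p v) < 2 * W := lt_of_le_of_lt hdist (by linarith)
  obtain ⟨y, hy, hxy⟩ := (Metric.infDist_lt_iff hne).1 h2
  obtain ⟨t, rfl⟩ := hy
  have hcoord : ∀ i, (p + t • v) i = p i + t * v i := fun i => rfl
  have hcd : ∀ i, |x i - (p i + t * v i)| ≤ 2 * W := by
    intro i
    have := coord_abs_le_dist x (p + t • v) i
    rw [hcoord i] at this
    linarith
  set t₀ : ℝ := (c' j - p j) / v j with ht₀
  have hvj0 : (0:ℝ) < v j := by linarith
  have hkey : (t - t₀) * v j = (x j - c' j) - (x j - (p j + t * v j)) := by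
    rw [ht₀]; field_simp
    ring
  have hxj : |x j - c' j| ≤ L := by
    have := hx j
    simp at this
    rw [abs_le]; constructor <;> linarith [this.1, this.2]
  have htt : |t - t₀| ≤ 2 * (L + 2 * W) := by
    have h1 : |(t - t₀) * v j| ≤ L + 2 * W := by
      rw [hkey]
      calc |(x j - c' j) - (x j - (p j + t * v j))| ≤ |x j - c' j| + |x j - (p j + t * v j)| :=
            abs_sub _ _
        _ ≤ L + 2 * W := add_le_add hxj (hcd j)
    rw [abs_mul, abs_of_pos hvj0] at h1
    nlinarith [abs_nonneg (t - t₀)]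
  intro i hij
  have hδL : δ * L ≤ W := by
    have h2n : (1:ℝ) ≤ 2 * n := by linarith
    have : δ * L ≤ δ * (δ⁻¹ * W / (2 * n)) :=
      mul_le_mul_of_nonneg_left hLle hδ.le
    calc δ * L ≤ δ * (δ⁻¹ * W / (2 * n)) := this
      _ = W / (2 * n) := by field_simp
      _ ≤ W := by rw [div_le_iff₀ (by linarith)]; nlinarith
  calc |x i - (p i + t₀ * v i)|
      = |(x i - (p i + t * v i)) + (t - t₀) * v i| := by ring_nf
    _ ≤ |x i - (p i + t * v i)| + |t - t₀| * |v i| := by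
        rw [← abs_mul]; exact abs_add_le _ _
    _ ≤ 2 * W + 2 * (L + 2 * W) * δ := by
        have := mul_le_mul (htt) (hvi i hij) (abs_nonneg _) (by positivity)
        linarith [hcd i]
    _ ≤ 8 * W := by nlinarith

theorem fat_cover {n : ℕ} {δ W L : ℝ} (hδ : 0 < δ) (hδ2 : δ ≤ 1 / 2) (hW : 0 < W)
    (hL0 : 0 ≤ L) (hLle : L ≤ δ⁻¹ * W / (2 * n)) {A : Set (EuclideanSpace ℝ (Fin n))}
    {c' x y : EuclideanSpace ℝ (Fin n)}
    (hx : ∀ i, x i ∈ Set.Icc (c' i) (c' i + L)) (hy : ∀ i, y i ∈ Set.Icc (c' i) (c' i + L))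
    (hdist : Metric.infDist x A ≤ W) : Metric.infDist y A ≤ δ⁻¹ * W := by
  have hδi : (2 : ℝ) ≤ δ⁻¹ := by
    have h1 : δ * δ⁻¹ = 1 := mul_inv_cancel₀ hδ.ne'
    nlinarith
  have hd : dist y x ≤ n * L := by
    refine dist_le_of_coord _ _ hL0 (fun i => ?_)
    have h1 := hx i
    have h2 := hy i
    simp only [Set.mem_Icc] at h1 h2
    rw [abs_le]
    constructor <;> linarith [h1.1, h1.2, h2.1, h2.2]
  have hnL : (n : ℝ) * L ≤ δ⁻¹ * W / 2 := by
    rcases Nat.eq_zero_or_pos n with h0 | h0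
    · simp [h0]
      positivity
    · have hn0 : (0:ℝ) < n := by exact_mod_cast h0
      calc (n : ℝ) * L ≤ n * (δ⁻¹ * W / (2 * n)) :=
            mul_le_mul_of_nonneg_left hLle (Nat.cast_nonneg n)
        _ = δ⁻¹ * W / 2 := by field_simp
  calc Metric.infDist y A ≤ Metric.infDist x A + dist y x :=
        Metric.infDist_le_infDist_add_dist
    _ ≤ W + δ⁻¹ * W / 2 := add_le_add hdist (le_trans hd hnL)
    _ ≤ δ⁻¹ * W := by nlinarith


theorem lw_marginal {n : ℕ} {p : ℝ} (hp0 : 0 ≤ p) (hp1 : ((n : ℝ) - 1) * p = 1)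
    {g : Fin n → (Fin n → ℝ) → ℝ≥0∞}
    (hgm : ∀ j, Measurable (g j))
    (hgi : ∀ j x t, g j (update x j t) = g j x)
    (s : Finset (Fin n)) (x : Fin n → ℝ) :
    (∫⋯∫⁻_s, (fun y => ∏ j, g j y ^ p)) x ≤
      (∏ j ∈ s, ((∫⋯∫⁻_(s.erase j), g j) x) ^ p) *
      ∏ j ∈ sᶜ, ((∫⋯∫⁻_s, g j) x) ^ p := by
  classical
  induction s using Finset.induction generalizing x with
  | empty => simp
  | @insert i s hi ih =>
    have hFm : Measurable (fun y => ∏ j, g j y ^ p) :=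
      Finset.measurable_prod _ (fun j _ => (hgm j).pow_const p)
    set T : Fin n → Finset (Fin n) := fun j => if j ∈ s then s.erase j else s with hT
    have hiT : ∀ j, i ∉ T j := by
      intro j
      by_cases hj : j ∈ s <;> simp [hT, hj, hi]
    have hconst : ∀ t : ℝ, (∫⋯∫⁻_s, g i) (update x i t) = (∫⋯∫⁻_s, g i) x := by
      intro t
      rw [lmarginal_update_of_notMem (hgm i) hi]
      congr 1
      funext y
      exact hgi i y t
    have hsplit : univ.erase i = s ∪ sᶜ.erase i := by
      ext j
      by_cases hj : j ∈ s
      · have : j ≠ i := by rintro rfl; exact hi hj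
        simp [hj, this]
      · simp only [mem_erase, mem_union, mem_compl, hj, mem_univ, and_true, or_false,
          false_or, iff_self_and]
        intro h; tauto
    have hdisj : Disjoint s (sᶜ.erase i) :=
      Finset.disjoint_left.2 (fun j hj hj' => (Finset.mem_compl.1 (Finset.mem_of_mem_erase hj')) hj)
    have hcard : ∑ _j ∈ univ.erase i, p = 1 := by
      rw [Finset.sum_const, Finset.card_erase_of_mem (mem_univ i), Finset.card_univ,
        Fintype.card_fin, nsmul_eq_mul]
      rw [← hp1]
      congr 1
      have : (1:ℕ) ≤ n := i.pos
      push_cast [Nat.cast_sub this]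
      ring
    calc (∫⋯∫⁻_insert i s, (fun y => ∏ j, g j y ^ p)) x
        = ∫⁻ t, (∫⋯∫⁻_s, (fun y => ∏ j, g j y ^ p)) (update x i t) := by
          rw [lmarginal_insert _ hFm hi]
      _ ≤ ∫⁻ t, ((∫⋯∫⁻_s, g i) x) ^ p *
            ∏ j ∈ univ.erase i, ((∫⋯∫⁻_(T j), g j) (update x i t)) ^ p := by
          refine lintegral_mono fun t => ?_
          refine (ih (update x i t)).trans (le_of_eq ?_)
          have : sᶜ = insert i (sᶜ.erase i) := by
            rw [Finset.insert_erase (Finset.mem_compl.2 hi)]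
          rw [this, Finset.prod_insert (notMem_erase i _), hconst t]
          rw [hsplit, Finset.prod_union hdisj]
          have h1 : ∀ j ∈ s, ((∫⋯∫⁻_(s.erase j), g j) (update x i t)) ^ p
              = ((∫⋯∫⁻_(T j), g j) (update x i t)) ^ p := by
            intro j hj; simp [hT, hj]
          have h2 : ∀ j ∈ sᶜ.erase i, ((∫⋯∫⁻_s, g j) (update x i t)) ^ p
              = ((∫⋯∫⁻_(T j), g j) (update x i t)) ^ p := by
            intro j hj
            have : j ∉ s := Finset.mem_compl.1 (Finset.mem_of_mem_erase hj)
            simp [hT, this]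
          rw [Finset.prod_congr rfl h1, Finset.prod_congr rfl h2]
          ring
      _ = ((∫⋯∫⁻_s, g i) x) ^ p *
            ∫⁻ t, ∏ j ∈ univ.erase i, ((∫⋯∫⁻_(T j), g j) (update x i t)) ^ p := by
          exact lintegral_const_mul _ (Finset.measurable_prod _ (fun j _ =>
            ((((hgm j).lmarginal _).comp (measurable_update x)).pow_const p)))
      _ ≤ ((∫⋯∫⁻_s, g i) x) ^ p *
            ∏ j ∈ univ.erase i, (∫⁻ t, (∫⋯∫⁻_(T j), g j) (update x i t)) ^ p := by
          gcongr
          refine ENNReal.lintegral_prod_norm_pow_le _ (fun j _ => ?_) hcard (fun _ _ => hp0)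
          exact (((hgm j).lmarginal _).comp (measurable_update x)).aemeasurable
      _ = ((∫⋯∫⁻_s, g i) x) ^ p *
            ∏ j ∈ univ.erase i, ((∫⋯∫⁻_(insert i (T j)), g j) x) ^ p := by
          congr 1
          refine Finset.prod_congr rfl fun j _ => ?_
          rw [lmarginal_insert _ (hgm j) (hiT j)]
      _ = (∏ j ∈ insert i s, ((∫⋯∫⁻_((insert i s).erase j), g j) x) ^ p) *
            ∏ j ∈ (insert i s)ᶜ, ((∫⋯∫⁻_(insert i s), g j) x) ^ p := by
          rw [Finset.prod_insert hi, Finset.erase_insert hi, Finset.compl_insert]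
          rw [hsplit, Finset.prod_union hdisj]
          have h1 : ∀ j ∈ s, ((∫⋯∫⁻_(insert i (T j)), g j) x) ^ p
              = ((∫⋯∫⁻_((insert i s).erase j), g j) x) ^ p := by
            intro j hj
            have hij : i ≠ j := by rintro rfl; exact hi hj
            rw [Finset.erase_insert_of_ne hij]
            simp [hT, hj]
          have h2 : ∀ j ∈ sᶜ.erase i, ((∫⋯∫⁻_(insert i (T j)), g j) x) ^ p
              = ((∫⋯∫⁻_(insert i s), g j) x) ^ p := by
            intro j hj
            have : j ∉ s := Finset.mem_compl.1 (Finset.mem_of_mem_erase hj)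
            simp [hT, this]
          rw [Finset.prod_congr rfl h1, Finset.prod_congr rfl h2]
          ring

/-- marginal of a function of a single unintegrated coordinate pulls out. -/
theorem lmarginal_single_mul {n : ℕ} {i : Fin n} (s : Finset (Fin n)) (hi : i ∉ s)
    (h : ℝ → ℝ≥0∞) (G : (Fin n → ℝ) → ℝ≥0∞) (hG : Measurable G) (z : Fin n → ℝ) :
    (∫⋯∫⁻_s, fun y => h (y i) * G y) z = h (z i) * (∫⋯∫⁻_s, G) z := by
  simp only [lmarginal]
  have key : ∀ y : (∀ _ : s, ℝ), updateFinset z s y i = z i := by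
    intro y
    simp [updateFinset_def, hi]
  calc ∫⁻ y, h (updateFinset z s y i) * G (updateFinset z s y)
        ∂(Measure.pi fun _ : s => volume)
      = ∫⁻ y, h (z i) * G (updateFinset z s y) ∂(Measure.pi fun _ : s => volume) := by
        congr 1; funext y; rw [key y]
    _ = h (z i) * ∫⁻ y, G (updateFinset z s y) ∂(Measure.pi fun _ : s => volume) :=
        lintegral_const_mul _ (hG.comp measurable_updateFinset)

/-- marginal of a product of single-variable functions. -/
theorem lmarginal_prod_single {n : ℕ} (h : Fin n → ℝ → ℝ≥0∞) (hm : ∀ i, Measurable (h i))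
    (s : Finset (Fin n)) (x : Fin n → ℝ) :
    (∫⋯∫⁻_s, fun y => ∏ i ∈ s, h i (y i)) x = ∏ i ∈ s, ∫⁻ t, h i t := by
  classical
  induction s using Finset.induction generalizing x with
  | empty => simp
  | @insert i s hi ih =>
    have hmeas : Measurable (fun y : Fin n → ℝ => ∏ i' ∈ insert i s, h i' (y i')) :=
      Finset.measurable_prod _ (fun i' _ => (hm i').comp (measurable_pi_apply i'))
    rw [lmarginal_insert _ hmeas hi]
    have e1 : (fun y : Fin n → ℝ => ∏ i' ∈ insert i s, h i' (y i'))
        = fun y => h i (y i) * ∏ i' ∈ s, h i' (y i') := by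
      funext y; rw [Finset.prod_insert hi]
    have hGm : Measurable (fun y : Fin n → ℝ => ∏ i' ∈ s, h i' (y i')) :=
      Finset.measurable_prod _ (fun i' _ => (hm i').comp (measurable_pi_apply i'))
    calc ∫⁻ t, (∫⋯∫⁻_s, fun y => ∏ i' ∈ insert i s, h i' (y i')) (update x i t)
        = ∫⁻ t, h i t * ∏ i' ∈ s, ∫⁻ u, h i' u := by
          congr 1; funext t
          rw [e1, lmarginal_single_mul s hi (h i) _ hGm, update_self, ih]
      _ = (∫⁻ t, h i t) * ∏ i' ∈ s, ∫⁻ u, h i' u :=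
          lintegral_mul_const _ (hm i)
      _ = ∏ i' ∈ insert i s, ∫⁻ t, h i' t := by rw [Finset.prod_insert hi]

theorem lmarginal_finset_sum' {n : ℕ} {ι : Type*} (A : Finset ι)
    {F : ι → (Fin n → ℝ) → ℝ≥0∞} (hF : ∀ a, Measurable (F a))
    (s : Finset (Fin n)) (x : Fin n → ℝ) :
    (∫⋯∫⁻_s, fun y => ∑ a ∈ A, F a y) x = ∑ a ∈ A, (∫⋯∫⁻_s, F a) x := by
  simp only [lmarginal]
  exact lintegral_finset_sum _ (fun a _ => (hF a).comp measurable_updateFinset)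

theorem lw_pi {n : ℕ} {p : ℝ} (hp0 : 0 ≤ p) (hp1 : ((n : ℝ) - 1) * p = 1)
    {g : Fin n → (Fin n → ℝ) → ℝ≥0∞} (hgm : ∀ j, Measurable (g j))
    (hgi : ∀ j x t, g j (update x j t) = g j x)
    {C : Fin n → ℝ≥0∞} (hC : ∀ j x, (∫⋯∫⁻_(univ.erase j), g j) x ≤ C j) :
    ∫⁻ y : Fin n → ℝ, ∏ j, g j y ^ p ≤ ∏ j, C j ^ p := by
  let x₀ : Fin n → ℝ := fun _ => 0
  have h := lw_marginal hp0 hp1 hgm hgi univ x₀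
  simp only [Finset.compl_univ, Finset.prod_empty, mul_one] at h
  calc ∫⁻ y : Fin n → ℝ, ∏ j, g j y ^ p
      = (∫⋯∫⁻_univ, fun y => ∏ j, g j y ^ p) x₀ := by
        rw [← lintegral_eq_lmarginal_univ x₀, volume_pi]
    _ ≤ ∏ j, ((∫⋯∫⁻_(univ.erase j), g j) x₀) ^ p := h
    _ ≤ ∏ j, C j ^ p :=
        Finset.prod_le_prod' (fun j _ => ENNReal.rpow_le_rpow (hC j x₀) hp0)

theorem lw_boxes {n : ℕ} {p : ℝ} (hp0 : 0 ≤ p) (hp1 : ((n : ℝ) - 1) * p = 1)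
    {N : Fin n → ℕ} (A : (j : Fin n) → Finset (Fin (N j)))
    (lo hi : (j : Fin n) → Fin (N j) → Fin n → ℝ) (len : ℝ)
    (hlen : ∀ j a i, hi j a i - lo j a i ≤ len) :
    ∫⁻ y : Fin n → ℝ, ∏ j, (∑ a ∈ A j, ∏ i ∈ univ.erase j,
        (Set.Icc (lo j a i) (hi j a i)).indicator 1 (y i)) ^ p
      ≤ ∏ j, (((A j).card : ℝ≥0∞) * ENNReal.ofReal len ^ (n - 1)) ^ p := by
  classical
  have hFm : ∀ j (a : Fin (N j)), Measurable (fun y : Fin n → ℝ =>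
      (∏ i ∈ univ.erase j, (Set.Icc (lo j a i) (hi j a i)).indicator 1 (y i) : ℝ≥0∞)) := by
    intro j a
    exact Finset.measurable_prod _ (fun i _ =>
      (measurable_const.indicator measurableSet_Icc).comp (measurable_pi_apply i))
  apply lw_pi hp0 hp1 (g := fun j y => ∑ a ∈ A j, ∏ i ∈ univ.erase j,
      (Set.Icc (lo j a i) (hi j a i)).indicator 1 (y i))
  · intro j
    exact Finset.measurable_sum _ (fun a _ => hFm j a)
  · intro j x t
    refine Finset.sum_congr rfl fun a _ => Finset.prod_congr rfl fun i hi' => ?_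
    have : i ≠ j := Finset.ne_of_mem_erase hi'
    rw [update_of_ne this]
  · intro j x
    rw [lmarginal_finset_sum' _ (hFm j)]
    calc ∑ a ∈ A j, (∫⋯∫⁻_(univ.erase j), fun y =>
          ∏ i ∈ univ.erase j, (Set.Icc (lo j a i) (hi j a i)).indicator 1 (y i)) x
        = ∑ a ∈ A j, ∏ i ∈ univ.erase j,
            ∫⁻ t, (Set.Icc (lo j a i) (hi j a i)).indicator 1 t := by
          refine Finset.sum_congr rfl fun a _ => ?_
          exact lmarginal_prod_single _ (fun i =>
            measurable_const.indicator measurableSet_Icc) _ x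
      _ ≤ ∑ a ∈ A j, ∏ i ∈ univ.erase j, ENNReal.ofReal len := by
          refine Finset.sum_le_sum fun a _ => Finset.prod_le_prod' fun i _ => ?_
          rw [lintegral_indicator_one measurableSet_Icc, Real.volume_Icc]
          exact ENNReal.ofReal_le_ofReal (hlen j a i)
      _ = ((A j).card : ℝ≥0∞) * ENNReal.ofReal len ^ (n - 1) := by
          rw [Finset.prod_const, Finset.sum_const, Finset.card_erase_of_mem (mem_univ j),
            Finset.card_univ, Fintype.card_fin, nsmul_eq_mul]

theorem subcube_est {n : ℕ} (hn : 2 ≤ n) {δ W L : ℝ} (hδ : 0 < δ) (hδ2 : δ ≤ 1 / 2)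
    (hW : 0 < W) (hL0 : 0 < L) (hLle : L ≤ δ⁻¹ * W / (2 * n)) (hLge : δ⁻¹ * W / (4 * n) ≤ L)
    (N : Fin n → ℕ) (p v : (j : Fin n) → Fin (N j) → EuclideanSpace ℝ (Fin n))
    (hv : ∀ j a, ‖v j a‖ = 1)
    (hangle : ∀ j a, InnerProductGeometry.angle (v j a) (EuclideanSpace.single j 1) ≤ δ)
    (c' : EuclideanSpace ℝ (Fin n)) :
    ∫⁻ x in {x : EuclideanSpace ℝ (Fin n) | ∀ i, x i ∈ Set.Ico (c' i) (c' i + L)},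
        ∏ j : Fin n, (∑ a : Fin (N j),
          tubeFn (line (p j a) (v j a)) W x) ^ ((1 : ℝ) / ((n : ℝ) - 1))
      ≤ ENNReal.ofReal ((64 * n) ^ n * δ ^ n) *
        ∫⁻ x in {x : EuclideanSpace ℝ (Fin n) | ∀ i, x i ∈ Set.Ico (c' i) (c' i + L)},
          ∏ j : Fin n, (∑ a : Fin (N j),
            tubeFn (line (p j a) (v j a)) (δ⁻¹ * W) x) ^ ((1 : ℝ) / ((n : ℝ) - 1)) := by
  classical
  set q : ℝ := (1 : ℝ) / ((n : ℝ) - 1) with hq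
  have hn1 : (1 : ℝ) < (n : ℝ) := by exact_mod_cast hn.trans_lt' one_lt_two
  have hq0 : 0 < q := by rw [hq]; apply div_pos one_pos; linarith
  have hq1 : ((n : ℝ) - 1) * q = 1 := by
    have h : (n:ℝ) - 1 ≠ 0 := by linarith
    rw [hq]; field_simp
  set P : Set (EuclideanSpace ℝ (Fin n)) :=
    {x | ∀ i, x i ∈ Set.Ico (c' i) (c' i + L)} with hPdef
  have hPmeas : MeasurableSet P := by
    have : P = ⋂ i, (fun x : EuclideanSpace ℝ (Fin n) => x i) ⁻¹' Set.Ico (c' i) (c' i + L) := by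
      ext x; simp [hPdef, Set.mem_iInter]
    rw [this]
    exact MeasurableSet.iInter fun i => (measurable_coord i) measurableSet_Ico
  have hPIcc : ∀ x ∈ P, ∀ i, x i ∈ Set.Icc (c' i) (c' i + L) := by
    intro x hx i
    exact Set.Ico_subset_Icc_self (hx i)
  -- the families of tubes meeting P
  set A : (j : Fin n) → Finset (Fin (N j)) := fun j => univ.filter
    (fun a => ∃ x ∈ P, Metric.infDist x (line (p j a) (v j a)) ≤ W) with hA
  have hvc : ∀ j a, 1 / 2 ≤ v j a j ∧ ∀ i, i ≠ j → |v j a i| ≤ δ :=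
    fun j a => direction_coords hδ hδ2 (hv j a) (hangle j a)
  -- slab centers
  set w : (j : Fin n) → (a : Fin (N j)) → Fin n → ℝ :=
    fun j a i => p j a i + ((c' j - p j a j) / v j a j) * v j a i with hw
  set g : Fin n → EuclideanSpace ℝ (Fin n) → ℝ≥0∞ := fun j x =>
    ∑ a ∈ A j, ∏ i ∈ univ.erase j,
      (Set.Icc (w j a i - 8 * W) (w j a i + 8 * W)).indicator 1 (x i) with hg
  -- pointwise upper bound on P
  have hpoint : ∀ x ∈ P, ∀ j, (∑ a : Fin (N j), tubeFn (line (p j a) (v j a)) W x) ≤ g j x := by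
    intro x hx j
    have h1 : ∑ a : Fin (N j), tubeFn (line (p j a) (v j a)) W x
        = ∑ a ∈ A j, tubeFn (line (p j a) (v j a)) W x := by
      symm
      apply Finset.sum_subset (Finset.subset_univ _)
      intro a _ ha
      rw [hA] at ha
      simp only [Finset.mem_filter, Finset.mem_univ, true_and] at ha
      push_neg at ha
      have := ha x hx
      rw [tubeFn, Set.indicator_of_notMem]
      simpa using this
    rw [h1, hg]
    refine Finset.sum_le_sum fun a _ => ?_
    rw [tubeFn]
    by_cases hmem : x ∈ {y : EuclideanSpace ℝ (Fin n) |
        Metric.infDist y (line (p j a) (v j a)) ≤ W}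
    · rw [Set.indicator_of_mem hmem]
      have hslab := slab_bound hδ hδ2 hW hLle (hvc j a).1 (hvc j a).2
          (fun i => hPIcc x hx i) hmem
      have : ∀ i ∈ univ.erase j,
          (Set.Icc (w j a i - 8 * W) (w j a i + 8 * W)).indicator
            (1 : ℝ → ℝ≥0∞) (x i) = 1 := by
        intro i hi
        have hij : i ≠ j := Finset.ne_of_mem_erase hi
        have h2 := hslab i hij
        rw [abs_le] at h2
        rw [Set.indicator_of_mem]
        · rfl
        · rw [hw]; constructor <;> simp <;> linarith [h2.1, h2.2]
      rw [Finset.prod_congr rfl this, Finset.prod_const_one]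
      simp
    · rw [Set.indicator_of_notMem hmem]
      exact zero_le
  -- measurability of g
  have hgm : ∀ j, Measurable (g j) := by
    intro j
    rw [hg]
    refine Finset.measurable_sum _ fun a _ => Finset.measurable_prod _ fun i _ => ?_
    exact (measurable_const.indicator measurableSet_Icc).comp (measurable_coord i)
  -- upper bound for LHS via Loomis--Whitney
  have hLHS : ∫⁻ x in P, ∏ j : Fin n, (∑ a : Fin (N j),
        tubeFn (line (p j a) (v j a)) W x) ^ q
      ≤ ENNReal.ofReal ((16 * W) ^ n) * ∏ j, ((A j).card : ℝ≥0∞) ^ q := by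
    have step1 : ∫⁻ x in P, ∏ j : Fin n, (∑ a : Fin (N j),
          tubeFn (line (p j a) (v j a)) W x) ^ q ≤ ∫⁻ x in P, ∏ j, g j x ^ q := by
      refine setLIntegral_mono (Finset.measurable_prod _ fun j _ => (hgm j).pow_const q) ?_
      intro x hx
      exact Finset.prod_le_prod' fun j _ => ENNReal.rpow_le_rpow (hpoint x hx j) hq0.le
    have step2 : ∫⁻ x in P, ∏ j, g j x ^ q ≤ ∫⁻ x, ∏ j, g j x ^ q :=
      setLIntegral_le_lintegral _ _
    have step3 : ∫⁻ x, ∏ j, g j x ^ q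
        = ∫⁻ y : Fin n → ℝ, ∏ j, (∑ a ∈ A j, ∏ i ∈ univ.erase j,
            (Set.Icc (w j a i - 8 * W) (w j a i + 8 * W)).indicator 1 (y i)) ^ q := by
      rw [← (EuclideanSpace.volume_preserving_symm_measurableEquiv_toLp (Fin n)).lintegral_comp]
      · rfl
      · refine Finset.measurable_prod _ fun j _ => Measurable.pow_const ?_ q
        refine Finset.measurable_sum _ fun a _ => Finset.measurable_prod _ fun i _ => ?_
        exact (measurable_const.indicator measurableSet_Icc).comp (measurable_pi_apply i)
    have step4 := lw_boxes (n := n) hq0.le hq1 A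
      (fun j a i => w j a i - 8 * W) (fun j a i => w j a i + 8 * W) (16 * W)
      (fun j a i => by ring_nf; linarith)
    have step5 : ∏ j, (((A j).card : ℝ≥0∞) * ENNReal.ofReal (16 * W) ^ (n - 1)) ^ q
        = ENNReal.ofReal ((16 * W) ^ n) * ∏ j, ((A j).card : ℝ≥0∞) ^ q := by
      have hcast : ((n - 1 : ℕ) : ℝ) = (n : ℝ) - 1 := by
        have : (1:ℕ) ≤ n := by omega
        push_cast [Nat.cast_sub this]
        ring
      have hfact : ∀ j : Fin n, (((A j).card : ℝ≥0∞) * ENNReal.ofReal (16 * W) ^ (n - 1)) ^ q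
          = ((A j).card : ℝ≥0∞) ^ q * ENNReal.ofReal (16 * W) := by
        intro j
        rw [ENNReal.mul_rpow_of_nonneg _ _ hq0.le]
        congr 1
        rw [← ENNReal.rpow_natCast (ENNReal.ofReal (16 * W)) (n - 1), ← ENNReal.rpow_mul,
          hcast, hq1, ENNReal.rpow_one]
      rw [Finset.prod_congr rfl fun j _ => hfact j, Finset.prod_mul_distrib,
        Finset.prod_const, Finset.card_univ, Fintype.card_fin,
        ← ENNReal.ofReal_pow (by positivity)]
      ring
    calc ∫⁻ x in P, ∏ j : Fin n, (∑ a : Fin (N j), tubeFn (line (p j a) (v j a)) W x) ^ q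
        ≤ ∫⁻ x in P, ∏ j, g j x ^ q := step1
      _ ≤ ∫⁻ x, ∏ j, g j x ^ q := step2
      _ ≤ ∏ j, (((A j).card : ℝ≥0∞) * ENNReal.ofReal (16 * W) ^ (n - 1)) ^ q := by
          rw [step3]; exact step4
      _ = ENNReal.ofReal ((16 * W) ^ n) * ∏ j, ((A j).card : ℝ≥0∞) ^ q := step5
  -- lower bound for RHS
  have hRHS : ENNReal.ofReal L ^ n * ∏ j, ((A j).card : ℝ≥0∞) ^ q
      ≤ ∫⁻ x in P, ∏ j : Fin n, (∑ a : Fin (N j),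
          tubeFn (line (p j a) (v j a)) (δ⁻¹ * W) x) ^ q := by
    have hpt : ∀ x ∈ P, ∀ j : Fin n, ((A j).card : ℝ≥0∞)
        ≤ ∑ a : Fin (N j), tubeFn (line (p j a) (v j a)) (δ⁻¹ * W) x := by
      intro x hx j
      have h1 : ∀ a ∈ A j, tubeFn (line (p j a) (v j a)) (δ⁻¹ * W) x = 1 := by
        intro a ha
        rw [hA] at ha
        simp only [Finset.mem_filter, Finset.mem_univ, true_and] at ha
        obtain ⟨x₀, hx₀P, hx₀d⟩ := ha
        have := fat_cover hδ hδ2 hW hL0.le hLle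
          (fun i => hPIcc x₀ hx₀P i) (fun i => hPIcc x hx i) hx₀d
        have hmem2 : x ∈ {y : EuclideanSpace ℝ (Fin n) |
            Metric.infDist y (line (p j a) (v j a)) ≤ δ⁻¹ * W} := this
        rw [tubeFn, Set.indicator_of_mem hmem2]
        rfl
      calc ((A j).card : ℝ≥0∞) = ∑ a ∈ A j, 1 := by simp
        _ = ∑ a ∈ A j, tubeFn (line (p j a) (v j a)) (δ⁻¹ * W) x :=
            (Finset.sum_congr rfl h1).symm
        _ ≤ ∑ a : Fin (N j), tubeFn (line (p j a) (v j a)) (δ⁻¹ * W) x :=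
            Finset.sum_le_sum_of_subset (Finset.subset_univ _)
    have hvol : volume P = ENNReal.ofReal L ^ n := by
      have hPpre : P = ((MeasurableEquiv.toLp 2 (Fin n → ℝ)).symm) ⁻¹'
          (Set.univ.pi fun i => Set.Ico (c' i) (c' i + L)) := by
        ext x
        simp [hPdef, Set.mem_pi]
      rw [hPpre, (EuclideanSpace.volume_preserving_symm_measurableEquiv_toLp (Fin n)).measure_preimage
        ((MeasurableSet.univ_pi fun i => measurableSet_Ico).nullMeasurableSet)]
      rw [volume_pi_pi]
      simp [Real.volume_Ico]
    calc ENNReal.ofReal L ^ n * ∏ j, ((A j).card : ℝ≥0∞) ^ q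
        = ∫⁻ _x in P, ∏ j, ((A j).card : ℝ≥0∞) ^ q := by
          rw [setLIntegral_const, hvol]; ring
      _ ≤ ∫⁻ x in P, ∏ j : Fin n, (∑ a : Fin (N j),
            tubeFn (line (p j a) (v j a)) (δ⁻¹ * W) x) ^ q := by
          refine setLIntegral_mono (measurable_tubeprod N p v _ q) ?_
          intro x hx
          exact Finset.prod_le_prod' fun j _ => ENNReal.rpow_le_rpow (hpt x hx j) hq0.le
  -- combine
  have hscalar : ENNReal.ofReal ((16 * W) ^ n)
      ≤ ENNReal.ofReal ((64 * n) ^ n * δ ^ n) * ENNReal.ofReal L ^ n := by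
    rw [← ENNReal.ofReal_pow hL0.le, ← ENNReal.ofReal_mul (by positivity)]
    apply ENNReal.ofReal_le_ofReal
    have h164 : 16 * W ≤ 64 * n * δ * L := by
      have h2 : δ * L ≥ δ * (δ⁻¹ * W / (4 * n)) := mul_le_mul_of_nonneg_left hLge hδ.le
      have hn0 : (0:ℝ) < n := by positivity
      have h3 : δ * (δ⁻¹ * W / (4 * n)) = W / (4 * n) := by field_simp
      rw [h3] at h2
      have h4 : 64 * (n:ℝ) * δ * L ≥ 64 * n * (W / (4 * n)) := by nlinarith
      have h5 : 64 * (n:ℝ) * (W / (4 * n)) = 16 * W := by field_simp; ring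
      linarith
    calc (16 * W) ^ n ≤ (64 * n * δ * L) ^ n :=
          pow_le_pow_left₀ (by positivity) h164 n
      _ = (64 * n) ^ n * δ ^ n * L ^ n := by rw [← mul_pow, ← mul_pow]
      _ = (64 * n) ^ n * δ ^ n * L ^ n := rfl
  calc ∫⁻ x in P, ∏ j : Fin n, (∑ a : Fin (N j), tubeFn (line (p j a) (v j a)) W x) ^ q
      ≤ ENNReal.ofReal ((16 * W) ^ n) * ∏ j, ((A j).card : ℝ≥0∞) ^ q := hLHS
    _ ≤ (ENNReal.ofReal ((64 * n) ^ n * δ ^ n) * ENNReal.ofReal L ^ n) *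
          ∏ j, ((A j).card : ℝ≥0∞) ^ q := mul_le_mul_left hscalar _
    _ = ENNReal.ofReal ((64 * n) ^ n * δ ^ n) *
          (ENNReal.ofReal L ^ n * ∏ j, ((A j).card : ℝ≥0∞) ^ q) := by ring
    _ ≤ ENNReal.ofReal ((64 * n) ^ n * δ ^ n) *
          ∫⁻ x in P, ∏ j : Fin n, (∑ a : Fin (N j),
            tubeFn (line (p j a) (v j a)) (δ⁻¹ * W) x) ^ q := mul_le_mul_right hRHS _

theorem hyperplane_null {n : ℕ} (i : Fin n) (a : ℝ) :
    volume {x : EuclideanSpace ℝ (Fin n) | x i = a} = 0 := by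
  have hpre : {x : EuclideanSpace ℝ (Fin n) | x i = a}
      = ((MeasurableEquiv.toLp 2 (Fin n → ℝ)).symm) ⁻¹' {y : Fin n → ℝ | y i = a} := rfl
  rw [hpre, (EuclideanSpace.volume_preserving_symm_measurableEquiv_toLp (Fin n)).measure_preimage]
  · rw [volume_pi]
    exact Measure.pi_hyperplane (fun _ => (volume : Measure ℝ)) i a
  · exact (MeasurableSet.preimage (measurableSet_singleton a)
      (measurable_pi_apply i)).nullMeasurableSet

theorem scale_step' (n : ℕ) (hn : 2 ≤ n) :
    ∃ C : ℝ, 0 < C ∧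
      ∀ (δ W : ℝ), 0 < δ → δ ≤ 1 / 2 → 0 < W →
      ∀ (N : Fin n → ℕ) (p v : (j : Fin n) → Fin (N j) → EuclideanSpace ℝ (Fin n)),
        (∀ j a, ‖v j a‖ = 1) →
        (∀ j a, InnerProductGeometry.angle (v j a) (EuclideanSpace.single j 1) ≤ δ) →
        ∀ S : ℝ, δ⁻¹ * W ≤ S → ∀ c : EuclideanSpace ℝ (Fin n),
          ∫⁻ x in cube c S,
              ∏ j : Fin n, (∑ a : Fin (N j),
                tubeFn (line (p j a) (v j a)) W x) ^ ((1 : ℝ) / ((n : ℝ) - 1))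
            ≤ ENNReal.ofReal (C * δ ^ n) *
                ∫⁻ x in cube c S,
                  ∏ j : Fin n, (∑ a : Fin (N j),
                    tubeFn (line (p j a) (v j a)) (δ⁻¹ * W) x) ^ ((1 : ℝ) / ((n : ℝ) - 1)) := by
  classical
  refine ⟨(64 * n) ^ n, by positivity, ?_⟩
  intro δ W hδ hδ2 hW N p v hv hangle S hS c
  set q : ℝ := (1 : ℝ) / ((n : ℝ) - 1) with hq
  have hn0 : (0 : ℝ) < n := by exact_mod_cast (by omega : 0 < n)
  have hδi : (0:ℝ) < δ⁻¹ := by positivity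
  have hSpos : 0 < S := lt_of_lt_of_le (by positivity) hS
  set L : ℝ := δ⁻¹ * W / (2 * n) with hLdef
  have hL : 0 < L := by positivity
  set m : ℕ := ⌈S / L⌉₊ with hm
  have hSL1 : (1 : ℝ) ≤ S / L := by
    rw [le_div_iff₀ hL]
    calc (1:ℝ) * L = δ⁻¹ * W / (2*n) := by rw [one_mul]
      _ ≤ δ⁻¹ * W := by
          rw [div_le_iff₀ (by positivity)]
          have hn2 : (2:ℝ) ≤ n := by exact_mod_cast hn
          have h2n : (1:ℝ) ≤ 2 * n := by linarith
          nlinarith [mul_pos hδi hW]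
      _ ≤ S := hS
  have hm1 : 1 ≤ m := by
    rw [hm]
    exact_mod_cast Nat.one_le_ceil_iff.2 (by linarith)
  have hm0 : (0:ℝ) < m := by exact_mod_cast hm1
  set L'' : ℝ := S / m with hL''def
  have hL''pos : 0 < L'' := by positivity
  have hmL : (m : ℝ) * L'' = S := by rw [hL''def]; field_simp
  have hL''le : L'' ≤ L := by
    rw [hL''def, div_le_iff₀ hm0]
    calc S = (S / L) * L := by field_simp
      _ ≤ (m : ℝ) * L := by
          have := Nat.le_ceil (S / L)
          exact mul_le_mul_of_nonneg_right (by exact_mod_cast this) hL.le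
      _ = L * m := mul_comm _ _
  have hL''ge : δ⁻¹ * W / (4 * n) ≤ L'' := by
    have hm2 : (m : ℝ) ≤ 2 * (S / L) := by
      have h1 : (m : ℝ) < S / L + 1 := by
        rw [hm]
        exact_mod_cast Nat.ceil_lt_add_one (by linarith)
      linarith
    have h3 : δ⁻¹ * W / (4 * n) = L / 2 := by rw [hLdef]; ring
    rw [h3, hL''def]
    rw [div_le_div_iff₀ (by norm_num) hm0]
    calc L * m ≤ L * (2 * (S / L)) := mul_le_mul_of_nonneg_left hm2 hL.le
      _ = S * 2 := by field_simp
  -- the grid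
  set Pk : (Fin n → Fin m) → Set (EuclideanSpace ℝ (Fin n)) := fun k =>
    {x | ∀ i, x i ∈ Set.Ico (c i + (k i : ℝ) * L'') (c i + (k i : ℝ) * L'' + L'')} with hPk
  have hPkmeas : ∀ k, MeasurableSet (Pk k) := by
    intro k
    have : Pk k = ⋂ i, (fun x : EuclideanSpace ℝ (Fin n) => x i) ⁻¹'
        Set.Ico (c i + (k i : ℝ) * L'') (c i + (k i : ℝ) * L'' + L'') := by
      ext x; simp [hPk, Set.mem_iInter]
    rw [this]
    exact MeasurableSet.iInter fun i => (measurable_coord i) measurableSet_Ico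
  have hPkdisj : Pairwise (Function.onFun Disjoint Pk) := by
    intro k k' hkk'
    have : ∃ i, k i ≠ k' i := by
      by_contra h
      push_neg at h
      exact hkk' (funext h)
    obtain ⟨i, hi⟩ := this
    rw [Function.onFun, Set.disjoint_left]
    intro x hx hx'
    have h1 := hx i
    have h2 := hx' i
    simp only [Set.mem_Ico] at h1 h2
    rcases lt_or_gt_of_ne hi with hlt | hlt
    · have : ((k i : ℝ) + 1) ≤ (k' i : ℝ) := by exact_mod_cast hlt
      nlinarith [h1.1, h1.2, h2.1, h2.2]
    · have : ((k' i : ℝ) + 1) ≤ (k i : ℝ) := by exact_mod_cast hlt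
      nlinarith [h1.1, h1.2, h2.1, h2.2]
  set Qh : Set (EuclideanSpace ℝ (Fin n)) :=
    {x | ∀ i, x i ∈ Set.Ico (c i) (c i + S)} with hQh
  have hunion : (⋃ k, Pk k) = Qh := by
    ext x
    simp only [Set.mem_iUnion, hPk, hQh, Set.mem_setOf_eq, Set.mem_Ico]
    constructor
    · rintro ⟨k, hk⟩ i
      have h1 := hk i
      have hki : (k i : ℝ) + 1 ≤ m := by exact_mod_cast (k i).2
      have hki0 : (0:ℝ) ≤ (k i : ℝ) := Nat.cast_nonneg _
      constructor
      · nlinarith [h1.1]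
      · have : (k i : ℝ) * L'' + L'' ≤ (m:ℝ) * L'' := by nlinarith
        calc x i < c i + ((k i : ℝ) * L'' + L'') := by linarith [h1.2]
          _ ≤ c i + (m:ℝ) * L'' := by linarith
          _ = c i + S := by rw [hmL]
    · intro hx
      have hk : ∀ i, ∃ ki : Fin m, (ki : ℝ) * L'' ≤ x i - c i ∧
          x i - c i < (ki : ℝ) * L'' + L'' := by
        intro i
        have h1 := (hx i).1
        have h2 := (hx i).2
        set r : ℝ := (x i - c i) / L'' with hr
        have hr0 : 0 ≤ r := by rw [hr]; exact div_nonneg (by linarith) hL''pos.le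
        have hrm : r < m := by
          rw [hr, div_lt_iff₀ hL''pos]
          calc x i - c i < S := by linarith
            _ = m * L'' := hmL.symm
        have hfloor : (⌊r⌋₊ : ℕ) < m := by
          exact_mod_cast Nat.floor_lt hr0 |>.2 (by exact_mod_cast hrm)
        refine ⟨⟨⌊r⌋₊, hfloor⟩, ?_, ?_⟩
        · have := Nat.floor_le hr0
          calc ((⌊r⌋₊ : ℕ) : ℝ) * L'' ≤ r * L'' := by
                exact mul_le_mul_of_nonneg_right (by exact_mod_cast this) hL''pos.le
            _ = x i - c i := by rw [hr]; field_simp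
        · have := Nat.lt_floor_add_one r
          calc x i - c i = r * L'' := by rw [hr]; field_simp
            _ < ((⌊r⌋₊ : ℝ) + 1) * L'' := by
                exact mul_lt_mul_of_pos_right (by exact_mod_cast this) hL''pos
            _ = ((⌊r⌋₊ : ℕ) : ℝ) * L'' + L'' := by push_cast; ring
      choose k hk1 hk2 using hk
      exact ⟨k, fun i => ⟨by linarith [hk1 i], by linarith [hk2 i]⟩⟩
  have hae : cube c S =ᵐ[volume] Qh := by
    rw [ae_eq_set]
    constructor
    · have hsub : cube c S \ Qh ⊆ ⋃ i, {x : EuclideanSpace ℝ (Fin n) | x i = c i + S} := by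
        rintro x ⟨hx1, hx2⟩
        simp only [hQh, Set.mem_setOf_eq, not_forall] at hx2
        obtain ⟨i, hi⟩ := hx2
        have h1 := hx1 i
        simp only [Set.mem_Icc] at h1
        rw [Set.mem_Ico] at hi
        push_neg at hi
        simp only [Set.mem_iUnion, Set.mem_setOf_eq]
        refine ⟨i, ?_⟩
        rcases lt_or_ge (x i) (c i + S) with h | h
        · exact absurd (hi h1.1) (not_le.2 h)
        · linarith [h1.2]
      refine measure_mono_null hsub ?_
      refine measure_iUnion_null fun i => hyperplane_null i (c i + S)
    · have : Qh \ cube c S = ∅ := by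
        rw [Set.diff_eq_empty]
        intro x hx i
        exact Set.Ico_subset_Icc_self (hx i)
      simp [this]
  have hmeasW := measurable_tubeprod N p v W q
  have hmeasW' := measurable_tubeprod N p v (δ⁻¹ * W) q
  -- decompose both integrals
  have hdecomp : ∀ (f : EuclideanSpace ℝ (Fin n) → ℝ≥0∞), Measurable f →
      ∫⁻ x in cube c S, f x = ∑ k : Fin n → Fin m, ∫⁻ x in Pk k, f x := by
    intro f hf
    rw [setLIntegral_congr hae, ← hunion, lintegral_iUnion hPkmeas hPkdisj, tsum_fintype]
  rw [hdecomp _ hmeasW, hdecomp _ hmeasW']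
  rw [Finset.mul_sum]
  refine Finset.sum_le_sum fun k _ => ?_
  have hest := subcube_est hn hδ hδ2 hW hL''pos (le_trans hL''le (le_refl L)) hL''ge
    N p v hv hangle (WithLp.toLp 2 fun i => c i + (k i : ℝ) * L'')
  exact hest


/-- Main scale-step lemma: there is `C_n` such that for `0 < δ ≤ 1/2`, `W > 0`, lines making
angle at most `δ` with the corresponding axes, and any cube of side `S ≥ δ⁻¹ W`,
`∫_{Q_S} ∏_j f_{j,W}^{1/(n-1)} ≤ C_n δⁿ ∫_{Q_S} ∏_j f_{j,δ⁻¹W}^{1/(n-1)}`. -/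
theorem scale_step (n : ℕ) (hn : 2 ≤ n) :
    ∃ C : ℝ, 0 < C ∧
      ∀ (δ W : ℝ), 0 < δ → δ ≤ 1 / 2 → 0 < W →
      ∀ (N : Fin n → ℕ) (p v : (j : Fin n) → Fin (N j) → EuclideanSpace ℝ (Fin n)),
        (∀ j a, ‖v j a‖ = 1) →
        (∀ j a, InnerProductGeometry.angle (v j a) (EuclideanSpace.single j 1) ≤ δ) →
        ∀ S : ℝ, δ⁻¹ * W ≤ S → ∀ c : EuclideanSpace ℝ (Fin n),
          ∫⁻ x in cube c S,
              ∏ j : Fin n, (∑ a : Fin (N j),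
                tubeFn (line (p j a) (v j a)) W x) ^ ((1 : ℝ) / ((n : ℝ) - 1))
            ≤ ENNReal.ofReal (C * δ ^ n) *
                ∫⁻ x in cube c S,
                  ∏ j : Fin n, (∑ a : Fin (N j),
                    tubeFn (line (p j a) (v j a)) (δ⁻¹ * W) x) ^ ((1 : ℝ) / ((n : ℝ) - 1)) := by
  exact scale_step' n hn
end
end
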